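/- arXiv:0909.3755 — 7 statements merged into one kernel-verified Lean document; each statement's English description precedes it below -/
import Mathlib

section
/- There is no skew-symmetric amorphous association scheme with at least 4 classes: for every d ≥ 4, every n ≥ 1, and every family A_0, A_1, …, A_d of n×n real matrices forming an association scheme with d classes, if the scheme is skew-symmetric then it is not amorphous. -/
open Matrix BigOperators

/-- An association scheme on `n` vertices, encoded as a family of `n × n`
real `0/1`-matrices indexed by `ι`: `e` is the index of the diagonal (identity)
relation and `σ` is the pairing sending each relation to its transpose.
All relations are nonempty, the identity relation is the identity matrix,
the relations partition `X × X` (the matrices sum to the all-ones matrix `J`),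
the family is closed under transposition, and products of the matrices are
nonnegative-integer linear combinations of the matrices. -/
def IsAssocScheme {ι : Type} [Fintype ι] (n : ℕ)
    (A : ι → Matrix (Fin n) (Fin n) ℝ) (e : ι) (σ : ι → ι) : Prop :=
  (∀ i, A i ≠ 0) ∧
  (∀ i x y, A i x y = 0 ∨ A i x y = 1) ∧
  A e = 1 ∧
  (∑ i, A i) = Matrix.of (fun _ _ => (1 : ℝ)) ∧
  (∀ i, (A i)ᵀ = A (σ i)) ∧
  (∀ i j, ∃ p : ι → ℕ, A i * A j = ∑ k, (p k : ℝ) • A k)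

/-- `Λ` is a partition of the index set `ι`: its blocks are nonempty and every
index lies in exactly one block. -/
def IsPartition {ι : Type} [Fintype ι] [DecidableEq ι]
    (Λ : Finset (Finset ι)) : Prop :=
  (∀ C ∈ Λ, C.Nonempty) ∧ ∀ i : ι, ∃! C, C ∈ Λ ∧ i ∈ C

/-- A partition `Λ` of the index set is admissible (for a scheme with diagonal
index `e` and transpose pairing `σ`) if `{e}` is a block of `Λ` and the image
of every block under the pairing `σ` is again a block. -/
def Admissible {ι : Type} [Fintype ι] [DecidableEq ι]
    (e : ι) (σ : ι → ι) (Λ : Finset (Finset ι)) : Prop :=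
  ({e} : Finset ι) ∈ Λ ∧ ∀ C ∈ Λ, C.image σ ∈ Λ

/-- The partition `Λ` gives rise to a fusion scheme: the block sums
`B_C = ∑_{i ∈ C} A_i`, indexed by the blocks of `Λ`, again form an
association scheme, with diagonal block `{e}`. -/
def GivesFusion {ι : Type} [Fintype ι] [DecidableEq ι] (n : ℕ)
    (A : ι → Matrix (Fin n) (Fin n) ℝ) (e : ι) (Λ : Finset (Finset ι)) : Prop :=
  ∃ (E : {C // C ∈ Λ}) (σ' : {C // C ∈ Λ} → {C // C ∈ Λ}),
    (E : Finset ι) = {e} ∧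
    IsAssocScheme n (fun C : {C // C ∈ Λ} => ∑ i ∈ (C : Finset ι), A i) E σ'

/-- The scheme is amorphous: every admissible partition of the index set gives
rise to a fusion scheme. -/
def Amorphous {ι : Type} [Fintype ι] [DecidableEq ι] (n : ℕ)
    (A : ι → Matrix (Fin n) (Fin n) ℝ) (e : ι) (σ : ι → ι) : Prop :=
  ∀ Λ : Finset (Finset ι), IsPartition Λ → Admissible e σ Λ → GivesFusion n A e Λ

set_option linter.unusedSectionVars false

namespace NoSkewAux

variable {ι : Type} [Fintype ι] [DecidableEq ι] {n : ℕ}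
  {A : ι → Matrix (Fin n) (Fin n) ℝ} {e : ι} {σ : ι → ι}

lemma sum_one (hA : IsAssocScheme n A e σ) (x y : Fin n) :
    ∑ m, A m x y = 1 := by
  have h := congrFun (congrFun hA.2.2.2.1 x) y
  simpa [Matrix.sum_apply] using h

lemma nonneg (hA : IsAssocScheme n A e σ) (m : ι) (x y : Fin n) : 0 ≤ A m x y := by
  rcases hA.2.1 m x y with h | h <;> simp [h]

lemma disj (hA : IsAssocScheme n A e σ) {u v : ι} (huv : u ≠ v) {x y : Fin n}
    (hu : A u x y = 1) : A v x y = 0 := by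
  rcases hA.2.1 v x y with h | h
  · exact h
  · exfalso
    have h1 : ∑ m, A m x y = 1 := sum_one hA x y
    have h2 : ∑ m ∈ ({u, v} : Finset ι), A m x y = 2 := by
      rw [Finset.sum_pair huv, hu, h]; norm_num
    have h3 : ∑ m ∈ ({u, v} : Finset ι), A m x y ≤ ∑ m, A m x y :=
      Finset.sum_le_sum_of_subset_of_nonneg (Finset.subset_univ _)
        (fun m _ _ => nonneg hA m x y)
    rw [h1, h2] at h3
    linarith

lemma exists_one (hA : IsAssocScheme n A e σ) (u : ι) : ∃ x y, A u x y = 1 := by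
  by_contra hno
  push_neg at hno
  apply hA.1 u
  ext x y
  rcases hA.2.1 u x y with h | h
  · simpa using h
  · exact absurd h (hno x y)

lemma inj (hA : IsAssocScheme n A e σ) {u v : ι} (h : A u = A v) : u = v := by
  by_contra huv
  obtain ⟨x, y, hxy⟩ := exists_one hA u
  have h0 : A v x y = 0 := disj hA huv hxy
  rw [← h, hxy] at h0
  norm_num at h0

lemma sig_sig (hA : IsAssocScheme n A e σ) (u : ι) : σ (σ u) = u := by
  apply inj hA
  rw [← hA.2.2.2.2.1 (σ u), ← hA.2.2.2.2.1 u, Matrix.transpose_transpose]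

lemma sig_e (hA : IsAssocScheme n A e σ) : σ e = e := by
  apply inj hA
  rw [← hA.2.2.2.2.1 e, hA.2.2.1, Matrix.transpose_one]

lemma diagz (hA : IsAssocScheme n A e σ) {u : ι} (hu : u ≠ e) (x : Fin n) :
    A u x x = 0 := by
  have he : A e x x = 1 := by rw [hA.2.2.1]; simp [Matrix.one_apply]
  exact disj hA (Ne.symm hu) he

lemma asym (hA : IsAssocScheme n A e σ) (s : Finset ι) {u : ι} (hu : u ∈ s)
    (hs : ∀ w ∈ s, σ w ≠ u) : (∑ m ∈ s, A m)ᵀ ≠ ∑ m ∈ s, A m := by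
  obtain ⟨x, y, hxy⟩ := exists_one hA u
  intro h
  have h1 := congrFun (congrFun h x) y
  have hL : (∑ m ∈ s, A m)ᵀ x y = 0 := by
    simp only [Matrix.transpose_apply, Matrix.sum_apply]
    refine Finset.sum_eq_zero fun m hm => ?_
    have : A m y x = A (σ m) x y := by rw [← hA.2.2.2.2.1 m, Matrix.transpose_apply]
    rw [this]
    exact disj hA (Ne.symm (hs m hm)) hxy
  have hR : (1 : ℝ) ≤ (∑ m ∈ s, A m) x y := by
    have h2 := Finset.single_le_sum (f := fun m => A m x y)
      (fun m _ => nonneg hA m x y) hu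
    simp only [hxy] at h2
    simpa [Matrix.sum_apply] using h2
  rw [hL] at h1
  rw [← h1] at hR
  norm_num at hR

lemma valency_odd (hA : IsAssocScheme n A e σ)
    (hfpf : ∀ j, σ j = j → j = e) {i : ι} (hi : i ≠ e) :
    ∃ k : ℕ, (∀ x, ∑ y, A i x y = (k : ℝ)) ∧ Odd k := by
  classical
  have htr : ∀ m, (A m)ᵀ = A (σ m) := hA.2.2.2.2.1
  have hAe : A e = 1 := hA.2.2.1
  choose P hP using hA.2.2.2.2.2
  set J : Matrix (Fin n) (Fin n) ℝ := Matrix.of fun _ _ => (1 : ℝ) with hJdef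
  have hsplit : A i * J = ∑ v, (A i * A v) := by
    rw [← Finset.mul_sum, hA.2.2.2.1]
  have hAJ : A i * J = ∑ m, ((∑ v, P i v m : ℕ) : ℝ) • A m := by
    rw [hsplit]
    calc ∑ v, (A i * A v) = ∑ v, ∑ m, (P i v m : ℝ) • A m := by
          exact Finset.sum_congr rfl fun v _ => hP i v
    _ = ∑ m, ∑ v, (P i v m : ℝ) • A m := Finset.sum_comm
    _ = ∑ m, ((∑ v, P i v m : ℕ) : ℝ) • A m := by
          refine Finset.sum_congr rfl fun m _ => ?_
          rw [← Finset.sum_smul, Nat.cast_sum]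
  set k : ℕ := ∑ v, P i v e with hkdef
  have hrow : ∀ x, (∑ y, A i x y) = (k : ℝ) := by
    intro x
    have h1 := congrFun (congrFun hAJ x) x
    have hL : (A i * J) x x = ∑ y, A i x y := by
      simp [Matrix.mul_apply, hJdef]
    have hR : (∑ m, ((∑ v, P i v m : ℕ) : ℝ) • A m) x x = (k : ℝ) := by
      rw [Matrix.sum_apply]
      rw [Finset.sum_eq_single e]
      · simp [hAe, Matrix.one_apply, hkdef]
      · intro m _ hm
        simp [diagz hA hm x]
      · simp
    rw [hL, hR] at h1
    exact h1
  -- the functional Φ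
  set Φ : Matrix (Fin n) (Fin n) ℝ → ℝ := fun X => ∑ x, ∑ y, X x y * A i x y with hΦdef
  set S : ℝ := ∑ x, ∑ y, A i x y with hSdef
  have hΦAi : Φ (A i) = S := by
    simp only [hΦdef, hSdef]
    refine Finset.sum_congr rfl fun x _ => Finset.sum_congr rfl fun y _ => ?_
    rcases hA.2.1 i x y with h | h <;> simp [h]
  have hΦA : ∀ m, m ≠ i → Φ (A m) = 0 := by
    intro m hm
    simp only [hΦdef]
    refine Finset.sum_eq_zero fun x _ => Finset.sum_eq_zero fun y _ => ?_
    rcases hA.2.1 i x y with h | h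
    · simp [h]
    · rw [disj hA (Ne.symm hm) h]; ring
  have hSone : (1 : ℝ) ≤ S := by
    obtain ⟨x0, y0, hxy0⟩ := exists_one hA i
    have h1 : (1 : ℝ) ≤ ∑ y, A i x0 y := by
      have h2 := Finset.single_le_sum (f := fun y => A i x0 y)
        (fun y _ => nonneg hA i x0 y) (Finset.mem_univ y0)
      simp only [hxy0] at h2
      exact h2
    have h3 : (∑ y, A i x0 y) ≤ S := by
      refine Finset.single_le_sum (f := fun x => ∑ y, A i x y)
        (fun x _ => Finset.sum_nonneg fun y _ => nonneg hA i x y) (Finset.mem_univ x0)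
    linarith
  have hSne : S ≠ 0 := by linarith
  have hΦsum : ∀ {κ : Type} [Fintype κ] (f : κ → Matrix (Fin n) (Fin n) ℝ),
      Φ (∑ v, f v) = ∑ v, Φ (f v) := by
    intro κ _ f
    calc Φ (∑ v, f v) = ∑ x, ∑ y, ∑ v, f v x y * A i x y := by
          simp [hΦdef, Matrix.sum_apply, Finset.sum_mul]
    _ = ∑ x, ∑ v, ∑ y, f v x y * A i x y :=
          Finset.sum_congr rfl fun x _ => Finset.sum_comm
    _ = ∑ v, ∑ x, ∑ y, f v x y * A i x y := Finset.sum_comm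
  have hΦsmul : ∀ (r : ℝ) (X : Matrix (Fin n) (Fin n) ℝ), Φ (r • X) = r * Φ X := by
    intro r X
    simp [hΦdef, Finset.mul_sum, mul_assoc]
  have hΦcombo : ∀ c : ι → ℕ, Φ (∑ m, (c m : ℝ) • A m) = (c i : ℝ) * S := by
    intro c
    rw [hΦsum]
    rw [Finset.sum_eq_single i]
    · rw [hΦsmul, hΦAi]
    · intro m _ hm
      rw [hΦsmul, hΦA m hm, mul_zero]
    · simp
  have hΦprod : ∀ v, Φ (A i * A v) = (P i v i : ℝ) * S := by
    intro v
    rw [hP i v]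
    exact hΦcombo _
  have hpairΦ : ∀ v, Φ (A i * A v) = Φ (A i * A (σ v)) := by
    intro v
    have hτv : ∀ z y : Fin n, A (σ v) z y = A v y z := by
      intro z y
      rw [← htr v, Matrix.transpose_apply]
    have e1 : Φ (A i * A v) = ∑ x, ∑ y, ∑ z, A i x z * A v z y * A i x y := by
      simp [hΦdef, Matrix.mul_apply, Finset.sum_mul]
    have e2 : Φ (A i * A (σ v)) = ∑ x, ∑ y, ∑ z, A i x z * A v y z * A i x y := by
      simp [hΦdef, Matrix.mul_apply, Finset.sum_mul, hτv]
    rw [e1, e2]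
    refine Finset.sum_congr rfl fun x _ => ?_
    rw [Finset.sum_comm]
    refine Finset.sum_congr rfl fun z _ => Finset.sum_congr rfl fun y _ => ?_
    ring
  have hpair : ∀ v, P i v i = P i (σ v) i := by
    intro v
    have h1 := hΦprod v
    have h2 := hΦprod (σ v)
    rw [hpairΦ v, h2] at h1
    have h3 : (P i (σ v) i : ℝ) = (P i v i : ℝ) :=
      mul_right_cancel₀ hSne h1
    exact_mod_cast h3.symm
  have hPe : P i e i = 1 := by
    have h1 := hΦprod e
    rw [hAe, mul_one, hΦAi] at h1
    have h2 : (P i e i : ℝ) * S = 1 * S := by rw [one_mul]; exact h1.symm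
    have h3 : (P i e i : ℝ) = 1 := mul_right_cancel₀ hSne h2
    exact_mod_cast h3
  have htotal : (∑ v, P i v i) = k := by
    have h1 : Φ (A i * J) = (k : ℝ) * S := by
      have hAiJ : ∀ x y : Fin n, (A i * J) x y = (k : ℝ) := by
        intro x y
        rw [Matrix.mul_apply]
        simp only [hJdef, Matrix.of_apply, mul_one]
        exact hrow x
      calc Φ (A i * J) = ∑ x, ∑ y, (k : ℝ) * A i x y := by
            simp only [hΦdef]
            exact Finset.sum_congr rfl fun x _ => Finset.sum_congr rfl fun y _ => by
              rw [hAiJ x y]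
      _ = (k : ℝ) * S := by
            simp only [hSdef, ← Finset.mul_sum]
    have h2 : Φ (A i * J) = (∑ v, (P i v i : ℝ)) * S := by
      rw [hsplit, hΦsum, Finset.sum_mul]
      exact Finset.sum_congr rfl fun v _ => hΦprod v
    rw [h2] at h1
    have h3 : (∑ v, (P i v i : ℝ)) = (k : ℝ) := mul_right_cancel₀ hSne h1
    exact_mod_cast h3
  -- parity
  have hσie : σ i ≠ e := by
    intro h
    apply hi
    have := sig_sig hA i
    rw [h, sig_e hA] at this
    exact this.symm
  have hiσi : σ i ≠ i := fun h => hi (hfpf i h)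
  have hkodd : (k : ZMod 2) = 1 := by
    set f : ι → ℕ := fun v => P i v i with hfdef
    have hsub : ({e, i, σ i} : Finset ι) ⊆ Finset.univ := Finset.subset_univ _
    have hsplit2 : (∑ v, f v) =
        (∑ v ∈ Finset.univ \ ({e, i, σ i} : Finset ι), f v) +
        (∑ v ∈ ({e, i, σ i} : Finset ι), f v) := (Finset.sum_sdiff hsub).symm
    have hei : e ∉ ({i, σ i} : Finset ι) := by
      simp only [Finset.mem_insert, Finset.mem_singleton]
      push_neg
      exact ⟨Ne.symm hi, Ne.symm hσie⟩
    have hii : i ∉ ({σ i} : Finset ι) := by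
      simp only [Finset.mem_singleton]
      exact Ne.symm hiσi
    have hsum3 : (∑ v ∈ ({e, i, σ i} : Finset ι), f v) = f e + (f i + f (σ i)) := by
      rw [Finset.sum_insert hei, Finset.sum_insert hii, Finset.sum_singleton]
    have hrest : (∑ v ∈ Finset.univ \ ({e, i, σ i} : Finset ι), ((f v : ZMod 2))) = 0 := by
      refine Finset.sum_involution (fun v _ => σ v) ?_ ?_ ?_ ?_
      · intro v _
        have hfv : f (σ v) = f v := (hpair v).symm
        rw [hfv]
        exact CharTwo.add_self_eq_zero _
      · intro v hv _
        simp only [Finset.mem_sdiff, Finset.mem_insert, Finset.mem_singleton] at hv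
        push_neg at hv
        intro h
        exact hv.2.1 (hfpf v h)
      · intro v hv
        simp only [Finset.mem_sdiff, Finset.mem_univ, true_and, Finset.mem_insert,
          Finset.mem_singleton] at hv ⊢
        push_neg at hv ⊢
        refine ⟨?_, ?_, ?_⟩
        · intro h
          apply hv.1
          rw [← sig_sig hA v, h, sig_e hA]
        · intro h
          apply hv.2.2
          rw [← sig_sig hA v, h]
        · intro h
          apply hv.2.1
          have := congrArg σ h
          rw [sig_sig hA, sig_sig hA] at this
          exact this
      · intro v _
        exact sig_sig hA v
    have hcast : (k : ZMod 2) =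
        (∑ v ∈ Finset.univ \ ({e, i, σ i} : Finset ι), ((f v : ZMod 2))) +
        ((f e : ZMod 2) + ((f i : ZMod 2) + (f (σ i) : ZMod 2))) := by
      rw [← htotal, hsplit2]
      push_cast [hsum3]
      ring
    rw [hcast, hrest]
    have hfe : (f e : ZMod 2) = 1 := by
      simp only [hfdef, hPe, Nat.cast_one]
    have hfσi : f (σ i) = f i := (hpair i).symm
    rw [hfe, hfσi, CharTwo.add_self_eq_zero]
    ring
  exact ⟨k, hrow, (ZMod.natCast_eq_one_iff_odd).mp hkodd⟩

end NoSkewAux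

/-- **Main Theorem (Theorem 1.2).** There is no skew-symmetric amorphous
association scheme with at least 4 classes. -/
theorem no_skewSymmetric_amorphous_ge_four_classes
    (d : ℕ) (hd : 4 ≤ d) (n : ℕ) (hn : 1 ≤ n)
    (A : Fin (d + 1) → Matrix (Fin n) (Fin n) ℝ) (σ : Fin (d + 1) → Fin (d + 1))
    (hA : IsAssocScheme n A 0 σ)
    (hskew : ∀ i, (A i)ᵀ = A i ↔ i = 0) :
    ¬ Amorphous n A 0 σ := by
  classical
  intro hAm
  have htr : ∀ m, (A m)ᵀ = A (σ m) := hA.2.2.2.2.1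
  have hfpf : ∀ j : Fin (d + 1), σ j = j → j = 0 := by
    intro j hj
    exact (hskew j).mp (by rw [htr j, hj])
  -- two distinct non-identity pairs
  set a : Fin (d + 1) := ⟨1, by omega⟩ with hadef
  have ha0 : a ≠ 0 := by
    intro h
    have := congrArg Fin.val h
    simp [hadef] at this
  have hsa0 : σ a ≠ 0 := by
    intro h
    apply ha0
    rw [← NoSkewAux.sig_sig hA a, h, NoSkewAux.sig_e hA]
  have hasa : σ a ≠ a := fun h => ha0 (hfpf a h)
  -- choose b outside {0, a, σ a}
  have hTcard : 0 < ((Finset.univ : Finset (Fin (d + 1))) \ {0, a, σ a}).card := by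
    have h1 : ((Finset.univ : Finset (Fin (d + 1))) \ {0, a, σ a}).card =
        Fintype.card (Fin (d + 1)) - ({0, a, σ a} : Finset (Fin (d + 1))).card := by
      rw [Finset.card_sdiff_of_subset (Finset.subset_univ _), Finset.card_univ]
    have h2 : ({0, a, σ a} : Finset (Fin (d + 1))).card ≤ 3 := by
      apply le_trans (Finset.card_insert_le _ _)
      have := Finset.card_insert_le a ({σ a} : Finset (Fin (d + 1)))
      simp at this ⊢
      omega
    rw [h1, Fintype.card_fin]
    omega
  obtain ⟨b, hb⟩ := Finset.card_pos.mp hTcard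
  simp only [Finset.mem_sdiff, Finset.mem_univ, true_and, Finset.mem_insert,
    Finset.mem_singleton] at hb
  push_neg at hb
  obtain ⟨hb0, hba, hbsa⟩ := hb
  have hab : a ≠ b := Ne.symm hba
  have hsb0 : σ b ≠ 0 := by
    intro h
    apply hb0
    rw [← NoSkewAux.sig_sig hA b, h, NoSkewAux.sig_e hA]
  have hbsb : σ b ≠ b := fun h => hb0 (hfpf b h)
  have hsba : σ b ≠ a := by
    intro h
    apply hbsa
    rw [← NoSkewAux.sig_sig hA b, h]
  have hsab : σ a ≠ b := fun h => hbsa h.symm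
  have hsasb : σ a ≠ σ b := by
    intro h
    apply hab
    have := congrArg σ h
    rwa [NoSkewAux.sig_sig hA, NoSkewAux.sig_sig hA] at this
  -- the big five-element set and the partition
  set Big : Finset (Fin (d + 1)) := {0, a, b, σ a, σ b} with hBigdef
  set Λ : Finset (Finset (Fin (d + 1))) :=
    insert {0} (insert {a, b} (insert {σ a, σ b}
      ((Finset.univ \ Big).image fun c => ({c} : Finset (Fin (d + 1)))))) with hΛdef
  have hmemBig : ∀ c : Fin (d + 1),
      c ∈ Big ↔ (c = 0 ∨ c = a ∨ c = b ∨ c = σ a ∨ c = σ b) := by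
    intro c
    simp [hBigdef]
  have hmemΛ : ∀ C : Finset (Fin (d + 1)), C ∈ Λ ↔
      (C = {0} ∨ C = {a, b} ∨ C = {σ a, σ b} ∨ ∃ c, c ∉ Big ∧ C = {c}) := by
    intro C
    simp only [hΛdef, Finset.mem_insert, Finset.mem_image, Finset.mem_sdiff,
      Finset.mem_univ, true_and]
    constructor
    · rintro (rfl | rfl | rfl | ⟨c, hc, rfl⟩)
      · exact Or.inl rfl
      · exact Or.inr (Or.inl rfl)
      · exact Or.inr (Or.inr (Or.inl rfl))
      · exact Or.inr (Or.inr (Or.inr ⟨c, hc, rfl⟩))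
    · rintro (rfl | rfl | rfl | ⟨c, hc, rfl⟩)
      · exact Or.inl rfl
      · exact Or.inr (Or.inl rfl)
      · exact Or.inr (Or.inr (Or.inl rfl))
      · exact Or.inr (Or.inr (Or.inr ⟨c, hc, rfl⟩))
  -- which block contains a given index
  have hblockmem : ∀ x : Fin (d + 1), ∀ C ∈ Λ, x ∈ C →
      ((x = 0 ∧ C = {0}) ∨ ((x = a ∨ x = b) ∧ C = {a, b}) ∨
       ((x = σ a ∨ x = σ b) ∧ C = {σ a, σ b}) ∨ (x ∉ Big ∧ C = {x})) := by
    intro x C hC hxC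
    rcases (hmemΛ C).mp hC with rfl | rfl | rfl | ⟨c, hc, rfl⟩
    · simp only [Finset.mem_singleton] at hxC
      exact Or.inl ⟨hxC, rfl⟩
    · simp only [Finset.mem_insert, Finset.mem_singleton] at hxC
      exact Or.inr (Or.inl ⟨hxC, rfl⟩)
    · simp only [Finset.mem_insert, Finset.mem_singleton] at hxC
      exact Or.inr (Or.inr (Or.inl ⟨hxC, rfl⟩))
    · simp only [Finset.mem_singleton] at hxC
      subst hxC
      exact Or.inr (Or.inr (Or.inr ⟨hc, rfl⟩))
  have hPart : IsPartition Λ := by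
    constructor
    · intro C hC
      rcases (hmemΛ C).mp hC with rfl | rfl | rfl | ⟨c, _, rfl⟩
      · exact ⟨0, by simp⟩
      · exact ⟨a, by simp⟩
      · exact ⟨σ a, by simp⟩
      · exact ⟨c, by simp⟩
    · intro x
      by_cases hx0 : x = 0
      · refine ⟨{0}, ⟨(hmemΛ _).mpr (Or.inl rfl), by simp [hx0]⟩, ?_⟩
        rintro C ⟨hC, hxC⟩
        rcases hblockmem x C hC hxC with ⟨_, rfl⟩ | ⟨hx, _⟩ | ⟨hx, _⟩ | ⟨hx, _⟩
        · rfl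
        · exfalso; subst hx0
          rcases hx with h | h
          · exact ha0 h.symm
          · exact hb0 h.symm
        · exfalso; subst hx0
          rcases hx with h | h
          · exact hsa0 h.symm
          · exact hsb0 h.symm
        · exfalso; subst hx0
          exact hx (by rw [hmemBig]; exact Or.inl rfl)
      · by_cases hxab : x = a ∨ x = b
        · refine ⟨{a, b}, ⟨(hmemΛ _).mpr (Or.inr (Or.inl rfl)), ?_⟩, ?_⟩
          · simp only [Finset.mem_insert, Finset.mem_singleton]
            exact hxab
          rintro C ⟨hC, hxC⟩
          rcases hblockmem x C hC hxC with ⟨hx, _⟩ | ⟨_, rfl⟩ | ⟨hx, _⟩ | ⟨hx, _⟩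
          · exact absurd hx hx0
          · rfl
          · exfalso
            rcases hxab with rfl | rfl
            · rcases hx with h | h
              · exact hasa h.symm
              · exact hsba h.symm
            · rcases hx with h | h
              · exact hsab h.symm
              · exact hbsb h.symm
          · exfalso
            apply hx
            rw [hmemBig]
            rcases hxab with rfl | rfl
            · exact Or.inr (Or.inl rfl)
            · exact Or.inr (Or.inr (Or.inl rfl))
        · by_cases hxsab : x = σ a ∨ x = σ b
          · refine ⟨{σ a, σ b}, ⟨(hmemΛ _).mpr (Or.inr (Or.inr (Or.inl rfl))), ?_⟩, ?_⟩
            · simp only [Finset.mem_insert, Finset.mem_singleton]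
              exact hxsab
            rintro C ⟨hC, hxC⟩
            rcases hblockmem x C hC hxC with ⟨hx, _⟩ | ⟨hx, _⟩ | ⟨_, rfl⟩ | ⟨hx, _⟩
            · exact absurd hx hx0
            · exact absurd hx hxab
            · rfl
            · exfalso
              apply hx
              rw [hmemBig]
              rcases hxsab with rfl | rfl
              · exact Or.inr (Or.inr (Or.inr (Or.inl rfl)))
              · exact Or.inr (Or.inr (Or.inr (Or.inr rfl)))
          · have hxBig : x ∉ Big := by
              rw [hmemBig]
              push_neg
              push_neg at hxab hxsab
              exact ⟨hx0, hxab.1, hxab.2, hxsab.1, hxsab.2⟩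
            refine ⟨{x}, ⟨(hmemΛ _).mpr (Or.inr (Or.inr (Or.inr ⟨x, hxBig, rfl⟩))),
              by simp⟩, ?_⟩
            rintro C ⟨hC, hxC⟩
            rcases hblockmem x C hC hxC with ⟨hx, _⟩ | ⟨hx, _⟩ | ⟨hx, _⟩ | ⟨_, rfl⟩
            · exact absurd hx hx0
            · exact absurd hx hxab
            · exact absurd hx hxsab
            · rfl
  have hAdm : Admissible 0 σ Λ := by
    constructor
    · exact (hmemΛ _).mpr (Or.inl rfl)
    · intro C hC
      rcases (hmemΛ C).mp hC with rfl | rfl | rfl | ⟨c, hc, rfl⟩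
      · rw [Finset.image_singleton, NoSkewAux.sig_e hA]
        exact (hmemΛ _).mpr (Or.inl rfl)
      · rw [Finset.image_insert, Finset.image_singleton]
        exact (hmemΛ _).mpr (Or.inr (Or.inr (Or.inl rfl)))
      · rw [Finset.image_insert, Finset.image_singleton,
          NoSkewAux.sig_sig hA, NoSkewAux.sig_sig hA]
        exact (hmemΛ _).mpr (Or.inr (Or.inl rfl))
      · rw [Finset.image_singleton]
        refine (hmemΛ _).mpr (Or.inr (Or.inr (Or.inr ⟨σ c, ?_, rfl⟩)))
        rw [hmemBig] at hc ⊢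
        push_neg at hc ⊢
        obtain ⟨hc0, hca, hcb, hcsa, hcsb⟩ := hc
        refine ⟨?_, ?_, ?_, ?_, ?_⟩
        · intro h; apply hc0
          rw [← NoSkewAux.sig_sig hA c, h, NoSkewAux.sig_e hA]
        · intro h; apply hcsa
          rw [← NoSkewAux.sig_sig hA c, h]
        · intro h; apply hcsb
          rw [← NoSkewAux.sig_sig hA c, h]
        · intro h; apply hca
          have := congrArg σ h
          rwa [NoSkewAux.sig_sig hA, NoSkewAux.sig_sig hA] at this
        · intro h; apply hcb
          have := congrArg σ h
          rwa [NoSkewAux.sig_sig hA, NoSkewAux.sig_sig hA] at this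
  obtain ⟨E, σ', hE, hFus⟩ := hAm Λ hPart hAdm
  have htr' := hFus.2.2.2.2.1
  -- the fused scheme is again skew-symmetric
  have hfpf' : ∀ C : {C // C ∈ Λ}, σ' C = C → C = E := by
    intro C hC
    have hsym : (∑ m ∈ (C : Finset (Fin (d + 1))), A m)ᵀ =
        ∑ m ∈ (C : Finset (Fin (d + 1))), A m := by
      have h1 := htr' C
      rw [hC] at h1
      exact h1
    rcases (hmemΛ C.1).mp C.2 with h0 | h1 | h2 | ⟨c, hc, hcs⟩
    · exact Subtype.ext (h0.trans hE.symm)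
    · exfalso
      refine NoSkewAux.asym hA (C.1) (u := a) ?_ ?_ ?_
      · rw [h1]; simp
      · intro w hw
        rw [h1] at hw
        simp only [Finset.mem_insert, Finset.mem_singleton] at hw
        rcases hw with rfl | rfl
        · exact hasa
        · exact hsba
      · exact hsym
    · exfalso
      refine NoSkewAux.asym hA (C.1) (u := σ a) ?_ ?_ ?_
      · rw [h2]; simp
      · intro w hw
        rw [h2] at hw
        simp only [Finset.mem_insert, Finset.mem_singleton] at hw
        rcases hw with rfl | rfl
        · rw [NoSkewAux.sig_sig hA]
          exact Ne.symm hasa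
        · rw [NoSkewAux.sig_sig hA]
          exact hbsa
      · exact hsym
    · exfalso
      refine NoSkewAux.asym hA (C.1) (u := c) ?_ ?_ ?_
      · rw [hcs]; simp
      · intro w hw
        rw [hcs] at hw
        simp only [Finset.mem_singleton] at hw
        subst hw
        intro h
        apply hc
        rw [hmemBig]
        exact Or.inl (hfpf w h)
      · exact hsym
  -- odd valencies
  obtain ⟨ka, hka, oka⟩ := NoSkewAux.valency_odd hA hfpf ha0
  obtain ⟨kb, hkb, okb⟩ := NoSkewAux.valency_odd hA hfpf hb0
  have habΛ : ({a, b} : Finset (Fin (d + 1))) ∈ Λ := (hmemΛ _).mpr (Or.inr (Or.inl rfl))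
  have hiE : (⟨{a, b}, habΛ⟩ : {C // C ∈ Λ}) ≠ E := by
    intro h
    have h1 : ({a, b} : Finset (Fin (d + 1))) = {0} := by
      have := congrArg (Subtype.val) h
      rw [hE] at this
      exact this
    have : a ∈ ({0} : Finset (Fin (d + 1))) := by
      rw [← h1]; simp
    simp only [Finset.mem_singleton] at this
    exact ha0 this
  obtain ⟨k', hk', ok'⟩ := NoSkewAux.valency_odd hFus hfpf' hiE
  -- compute the fused valency
  have hx0 : (0 : ℕ) < n := hn
  set x0 : Fin n := ⟨0, hx0⟩ with hx0def
  have hkval : (k' : ℝ) = (ka : ℝ) + (kb : ℝ) := by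
    have h1 := hk' x0
    have h2 : ∀ y : Fin n,
        (∑ m ∈ (({a, b} : Finset (Fin (d + 1)))), A m) x0 y = A a x0 y + A b x0 y := by
      intro y
      rw [Finset.sum_pair hab]
      simp [Matrix.add_apply]
    rw [← h1]
    calc (∑ y, (fun C : {C // C ∈ Λ} => ∑ m ∈ (C : Finset (Fin (d + 1))), A m)
          (⟨{a, b}, habΛ⟩ : {C // C ∈ Λ}) x0 y)
        = ∑ y, (A a x0 y + A b x0 y) := Finset.sum_congr rfl fun y _ => h2 y
      _ = (∑ y, A a x0 y) + (∑ y, A b x0 y) := Finset.sum_add_distrib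
      _ = (ka : ℝ) + (kb : ℝ) := by rw [hka x0, hkb x0]
  have hknat : k' = ka + kb := by exact_mod_cast hkval
  have heven : Even (ka + kb) := Odd.add_odd oka okb
  rw [← hknat] at heven
  exact (Nat.not_odd_iff_even.mpr heven) ok'
end

section
/- Every non-symmetric amorphous association scheme is commutative: if A_0, A_1, …, A_d form an association scheme that is amorphous and non-symmetric, then A_i · A_j = A_j · A_i for all i, j. -/
open Matrix BigOperators

/-! ### Auxiliary partition machinery -/

/-- The partition of `ι` into singletons of elements of `S` together with the
complement of `S` as a single block (if nonempty). -/
def fusePart {ι : Type} [Fintype ι] [DecidableEq ι] (S : Finset ι) : Finset (Finset ι) :=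
  (insert (Finset.univ \ S) (S.image fun a => ({a} : Finset ι))).erase ∅

lemma singleton_mem_fusePart {ι : Type} [Fintype ι] [DecidableEq ι] {S : Finset ι}
    {a : ι} (ha : a ∈ S) : ({a} : Finset ι) ∈ fusePart S :=
  Finset.mem_erase.2 ⟨Finset.singleton_ne_empty a,
    Finset.mem_insert.2 (Or.inr (Finset.mem_image_of_mem _ ha))⟩

lemma mem_fusePart_elim {ι : Type} [Fintype ι] [DecidableEq ι] {S : Finset ι}
    {C : Finset ι} (hC : C ∈ fusePart S) :
    (∃ a ∈ S, C = {a}) ∨ C = Finset.univ \ S := by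
  rw [fusePart, Finset.mem_erase] at hC
  rcases Finset.mem_insert.1 hC.2 with h | h
  · right; exact h
  · left
    obtain ⟨a, haS, hEq⟩ := Finset.mem_image.1 h
    exact ⟨a, haS, hEq.symm⟩

lemma isPartition_fusePart {ι : Type} [Fintype ι] [DecidableEq ι] (S : Finset ι) :
    IsPartition (fusePart S) := by
  constructor
  · intro C hC
    exact Finset.nonempty_iff_ne_empty.2 (Finset.mem_erase.1 hC).1
  · intro x
    by_cases hx : x ∈ S
    · refine ⟨{x}, ⟨singleton_mem_fusePart hx, Finset.mem_singleton_self x⟩, ?_⟩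
      rintro C ⟨hC, hxC⟩
      rcases mem_fusePart_elim hC with ⟨a, _, rfl⟩ | rfl
      · rw [Finset.mem_singleton] at hxC
        rw [hxC]
      · exact absurd hx (Finset.mem_sdiff.1 hxC).2
    · have hxR : x ∈ Finset.univ \ S := Finset.mem_sdiff.2 ⟨Finset.mem_univ x, hx⟩
      refine ⟨Finset.univ \ S,
        ⟨Finset.mem_erase.2 ⟨Finset.ne_empty_of_mem hxR, Finset.mem_insert_self _ _⟩, hxR⟩, ?_⟩
      rintro C ⟨hC, hxC⟩
      rcases mem_fusePart_elim hC with ⟨a, haS, rfl⟩ | rfl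
      · rw [Finset.mem_singleton] at hxC
        exact absurd (hxC ▸ haS) hx
      · rfl

lemma admissible_fusePart {ι : Type} [Fintype ι] [DecidableEq ι]
    (e : ι) (σ : ι → ι) (hinv : ∀ x, σ (σ x) = x) {S : Finset ι}
    (heS : e ∈ S) (hcl : ∀ x ∈ S, σ x ∈ S) :
    Admissible e σ (fusePart S) := by
  constructor
  · exact singleton_mem_fusePart heS
  · intro C hC
    rcases mem_fusePart_elim hC with ⟨a, haS, rfl⟩ | rfl
    · rw [Finset.image_singleton]
      exact singleton_mem_fusePart (hcl a haS)
    · have himg : (Finset.univ \ S).image σ = Finset.univ \ S := by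
        ext x
        simp only [Finset.mem_image, Finset.mem_sdiff, Finset.mem_univ, true_and]
        constructor
        · rintro ⟨y, hy, rfl⟩
          intro hxS
          exact hy (by simpa [hinv y] using hcl _ hxS)
        · intro hx
          refine ⟨σ x, fun h => hx (by simpa [hinv x] using hcl _ h), hinv x⟩
      rw [himg]
      exact hC

/-! ### Basic facts about association schemes -/

section SchemeFacts

variable {d n : ℕ} {A : Fin (d + 1) → Matrix (Fin n) (Fin n) ℝ}
  {σ : Fin (d + 1) → Fin (d + 1)}

lemma sum_entry (hA : IsAssocScheme n A 0 σ) (x y : Fin n) :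
    ∑ m, A m x y = 1 := by
  have h' : (∑ m, A m) x y = Matrix.of (fun _ _ => (1 : ℝ)) x y := by
    rw [hA.2.2.2.1]
  simpa [Matrix.sum_apply] using h'

lemma entry_nonneg (hA : IsAssocScheme n A 0 σ) (m : Fin (d + 1)) (x y : Fin n) :
    0 ≤ A m x y := by
  rcases hA.2.1 m x y with h | h <;> rw [h] <;> norm_num

lemma diag_zero (hA : IsAssocScheme n A 0 σ) {l : Fin (d + 1)} (hl : l ≠ 0) (x : Fin n) :
    A l x x = 0 := by
  have hs := sum_entry hA x x
  have h0 : A 0 x x = 1 := by rw [hA.2.2.1]; exact Matrix.one_apply_eq x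
  have herase : ∑ m ∈ Finset.univ.erase 0, A m x x = 0 := by
    have hadd := Finset.add_sum_erase Finset.univ (fun m => A m x x) (Finset.mem_univ 0)
    rw [hs, h0] at hadd
    linarith
  exact (Finset.sum_eq_zero_iff_of_nonneg
    (fun m _ => entry_nonneg hA m x x)).1 herase l
    (Finset.mem_erase.2 ⟨hl, Finset.mem_univ l⟩)

lemma A_inj (hA : IsAssocScheme n A 0 σ) : Function.Injective A := by
  intro a b hab
  by_contra hne
  have hnz := hA.1 a
  have hex : ∃ x y, A a x y ≠ 0 := by
    by_contra hc
    push_neg at hc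
    exact hnz (by ext x y; simpa using hc x y)
  obtain ⟨x, y, hxy⟩ := hex
  have h1 : A a x y = 1 := (hA.2.1 a x y).resolve_left hxy
  have h2 : A b x y = 1 := by rw [← hab]; exact h1
  have hs := sum_entry hA x y
  have hle : ∑ m ∈ ({a, b} : Finset (Fin (d + 1))), A m x y ≤ ∑ m, A m x y :=
    Finset.sum_le_sum_of_subset_of_nonneg (Finset.subset_univ _)
      (fun m _ _ => entry_nonneg hA m x y)
  rw [Finset.sum_pair hne, h1, h2, hs] at hle
  linarith

lemma sigma_invol (hA : IsAssocScheme n A 0 σ) (l : Fin (d + 1)) : σ (σ l) = l := by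
  apply A_inj hA
  rw [← hA.2.2.2.2.1 (σ l), ← hA.2.2.2.2.1 l, Matrix.transpose_transpose]

lemma sigma_zero (hA : IsAssocScheme n A 0 σ) : σ 0 = 0 := by
  apply A_inj hA
  rw [← hA.2.2.2.2.1 0, hA.2.2.1, Matrix.transpose_one]

lemma mulJ (hA : IsAssocScheme n A 0 σ) (l : Fin (d + 1)) :
    ∃ k : ℝ, A l * Matrix.of (fun _ _ => (1 : ℝ)) = k • Matrix.of (fun _ _ => (1 : ℝ)) := by
  obtain ⟨p, hp⟩ := hA.2.2.2.2.2 l (σ l)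
  refine ⟨(p 0 : ℝ), ?_⟩
  have hrow : ∀ x : Fin n, ∑ z, A l x z = (p 0 : ℝ) := by
    intro x
    have hd : (A l * A (σ l)) x x = ∑ z, A l x z := by
      rw [Matrix.mul_apply]
      apply Finset.sum_congr rfl
      intro z _
      have hz : A (σ l) z x = A l x z := by rw [← hA.2.2.2.2.1 l]; rfl
      rw [hz]
      rcases hA.2.1 l x z with h | h <;> rw [h] <;> ring
    have hd2 : (∑ r, (p r : ℝ) • A r) x x = (p 0 : ℝ) := by
      rw [Matrix.sum_apply]
      rw [Finset.sum_eq_single 0]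
      · rw [Matrix.smul_apply, hA.2.2.1, Matrix.one_apply_eq, smul_eq_mul, mul_one]
      · intro r _ hr
        rw [Matrix.smul_apply, diag_zero hA hr, smul_eq_mul, mul_zero]
      · intro h; exact absurd (Finset.mem_univ 0) h
    have := congrFun (congrFun hp x) x
    rw [hd] at this
    rw [hd2] at this
    exact this
  ext x y
  rw [Matrix.mul_apply, Matrix.smul_apply]
  simp only [Matrix.of_apply, mul_one, smul_eq_mul]
  exact hrow x

lemma eq_zero_of_trace_mul_transpose {X : Matrix (Fin n) (Fin n) ℝ}
    (h : Matrix.trace (X * Xᵀ) = 0) : X = 0 := by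
  have hexp : Matrix.trace (X * Xᵀ) = ∑ x, ∑ y, X x y * X x y := by
    simp [Matrix.trace, Matrix.diag, Matrix.mul_apply, Matrix.transpose_apply]
  rw [hexp] at h
  have h1 := (Finset.sum_eq_zero_iff_of_nonneg
    (fun x _ => Finset.sum_nonneg fun y _ => mul_self_nonneg (X x y))).1 h
  ext x y
  have h2 := (Finset.sum_eq_zero_iff_of_nonneg
    (fun y _ => mul_self_nonneg (X x y))).1 (h1 x (Finset.mem_univ x)) y (Finset.mem_univ y)
  simpa using mul_self_eq_zero.1 h2

lemma trace_rot {M N P : Matrix (Fin n) (Fin n) ℝ} (h : M * P = P * M) :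
    Matrix.trace (M * (N * P)) = Matrix.trace (M * (P * N)) := by
  calc Matrix.trace (M * (N * P)) = Matrix.trace (M * N * P) := by rw [mul_assoc]
    _ = Matrix.trace (P * M * N) := Matrix.trace_mul_cycle M N P
    _ = Matrix.trace (M * P * N) := by rw [← h]
    _ = Matrix.trace (M * (P * N)) := by rw [mul_assoc]

lemma trace_rot' {M N P : Matrix (Fin n) (Fin n) ℝ} (h : M * N = N * M) :
    Matrix.trace (M * (N * P)) = Matrix.trace (M * (P * N)) := by
  calc Matrix.trace (M * (N * P)) = Matrix.trace (M * N * P) := by rw [mul_assoc]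
    _ = Matrix.trace (N * M * P) := by rw [h]
    _ = Matrix.trace (N * (M * P)) := by rw [mul_assoc]
    _ = Matrix.trace (M * P * N) := (Matrix.trace_mul_comm _ _)
    _ = Matrix.trace (M * (P * N)) := by rw [mul_assoc]

lemma traceJ_comm (hA : IsAssocScheme n A 0 σ) (a b : Fin (d + 1)) :
    Matrix.trace ((Matrix.of fun _ _ => (1 : ℝ)) * (A a * A b)) =
      Matrix.trace ((Matrix.of fun _ _ => (1 : ℝ)) * (A b * A a)) := by
  obtain ⟨ka, hka⟩ := mulJ hA a
  obtain ⟨kb, hkb⟩ := mulJ hA b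
  have key : ∀ (u v : Fin (d + 1)) (ku kv : ℝ),
      A u * Matrix.of (fun _ _ => (1 : ℝ)) = ku • Matrix.of (fun _ _ => (1 : ℝ)) →
      A v * Matrix.of (fun _ _ => (1 : ℝ)) = kv • Matrix.of (fun _ _ => (1 : ℝ)) →
      Matrix.trace ((Matrix.of fun _ _ => (1 : ℝ)) * (A u * A v)) =
        ku * kv * Matrix.trace ((Matrix.of fun _ _ => (1 : ℝ)) : Matrix (Fin n) (Fin n) ℝ) := by
    intro u v ku kv hu hv
    rw [Matrix.trace_mul_comm]
    rw [mul_assoc, hv, Matrix.mul_smul, Matrix.trace_smul, hu, Matrix.trace_smul]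
    simp [smul_eq_mul]
    ring
  rw [key a b ka kb hka hkb, key b a kb ka hkb hka]
  ring

/-- The key engine: given a σ-closed subset `S` containing `0`, for any
`i j ∈ S`, if the commutator is trace-orthogonal to every `A l` with `l ∈ S`
and to the all-ones matrix, then `A i` and `A j` commute. -/
lemma comm_of_traces (hA : IsAssocScheme n A 0 σ) (ham : Amorphous n A 0 σ)
    (S : Finset (Fin (d + 1))) (h0S : 0 ∈ S) (hcl : ∀ x ∈ S, σ x ∈ S)
    (i j : Fin (d + 1)) (hiS : i ∈ S) (hjS : j ∈ S)
    (htr : ∀ l ∈ S, Matrix.trace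
      (A l * (A (σ j) * A (σ i) - A (σ i) * A (σ j))) = 0)
    (htrJ : Matrix.trace
      ((Matrix.of fun _ _ => (1 : ℝ)) * (A (σ j) * A (σ i) - A (σ i) * A (σ j))) = 0) :
    A i * A j = A j * A i := by
  obtain ⟨E, σ', hE, hsch⟩ :=
    ham (fusePart S) (isPartition_fusePart S)
      (admissible_fusePart 0 σ (sigma_invol hA) h0S hcl)
  have memi : ({i} : Finset (Fin (d + 1))) ∈ fusePart S := singleton_mem_fusePart hiS
  have memj : ({j} : Finset (Fin (d + 1))) ∈ fusePart S := singleton_mem_fusePart hjS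
  obtain ⟨p, hp⟩ := hsch.2.2.2.2.2 ⟨{i}, memi⟩ ⟨{j}, memj⟩
  obtain ⟨q, hq⟩ := hsch.2.2.2.2.2 ⟨{j}, memj⟩ ⟨{i}, memi⟩
  simp only [Finset.sum_singleton] at hp hq
  have hX : A i * A j - A j * A i =
      ∑ K : {C // C ∈ fusePart S}, ((p K : ℝ) - (q K : ℝ)) •
        (∑ l ∈ (K : Finset (Fin (d + 1))), A l) := by
    rw [hp, hq, ← Finset.sum_sub_distrib]
    exact Finset.sum_congr rfl fun K _ => (sub_smul _ _ _).symm
  have hXT : (A i * A j - A j * A i)ᵀ =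
      A (σ j) * A (σ i) - A (σ i) * A (σ j) := by
    rw [Matrix.transpose_sub, Matrix.transpose_mul, Matrix.transpose_mul,
      hA.2.2.2.2.1, hA.2.2.2.2.1]
  have htrB : ∀ K : {C // C ∈ fusePart S},
      Matrix.trace ((∑ l ∈ (K : Finset (Fin (d + 1))), A l) *
        (A i * A j - A j * A i)ᵀ) = 0 := by
    intro K
    rw [hXT]
    rcases mem_fusePart_elim K.2 with ⟨a, haS, hKa⟩ | hKR
    · rw [hKa, Finset.sum_singleton]
      exact htr a haS
    · rw [hKR, Finset.sum_sdiff_eq_sub (Finset.subset_univ S), hA.2.2.2.1,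
        sub_mul, Matrix.trace_sub, Finset.sum_mul, Matrix.trace_sum,
        Finset.sum_eq_zero htr, htrJ, sub_zero]
  have htrXX : Matrix.trace ((A i * A j - A j * A i) *
      (A i * A j - A j * A i)ᵀ) = 0 := by
    have h1 : (A i * A j - A j * A i) * (A i * A j - A j * A i)ᵀ =
        ∑ K : {C // C ∈ fusePart S}, ((p K : ℝ) - (q K : ℝ)) •
          ((∑ l ∈ (K : Finset (Fin (d + 1))), A l) * (A i * A j - A j * A i)ᵀ) := by
      rw [hX, Finset.sum_mul]
      exact Finset.sum_congr rfl fun K _ => smul_mul_assoc _ _ _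
    rw [h1, Matrix.trace_sum]
    refine Finset.sum_eq_zero fun K _ => ?_
    rw [Matrix.trace_smul, htrB K, smul_zero]
  have h0 : A i * A j - A j * A i = 0 := eq_zero_of_trace_mul_transpose htrXX
  exact sub_eq_zero.mp h0

/-- Every relation commutes with its transpose. -/
lemma pair_comm (hA : IsAssocScheme n A 0 σ) (ham : Amorphous n A 0 σ)
    (a : Fin (d + 1)) : A a * A (σ a) = A (σ a) * A a := by
  refine comm_of_traces hA ham {0, a, σ a} (by simp) ?_ a (σ a)
    (by simp) (by simp) ?_ ?_
  · intro x hx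
    simp only [Finset.mem_insert, Finset.mem_singleton] at hx ⊢
    rcases hx with rfl | rfl | rfl
    · left; exact sigma_zero hA
    · right; right; rfl
    · right; left; exact sigma_invol hA _
  · intro l hl
    rw [sigma_invol hA a, mul_sub, Matrix.trace_sub, sub_eq_zero]
    simp only [Finset.mem_insert, Finset.mem_singleton] at hl
    rcases hl with rfl | rfl | rfl
    · rw [hA.2.2.1, one_mul, one_mul]
      exact Matrix.trace_mul_comm _ _
    · exact trace_rot' rfl
    · exact trace_rot rfl
  · rw [sigma_invol hA a, mul_sub, Matrix.trace_sub, sub_eq_zero]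
    exact traceJ_comm hA a (σ a)

end SchemeFacts

/-- Every non-symmetric amorphous association scheme is commutative. -/
theorem nonSymmetric_amorphous_is_commutative
    (d : ℕ) (n : ℕ)
    (A : Fin (d + 1) → Matrix (Fin n) (Fin n) ℝ) (σ : Fin (d + 1) → Fin (d + 1))
    (hA : IsAssocScheme n A 0 σ)
    (hns : ∃ i, A i ≠ (A i)ᵀ)
    (ham : Amorphous n A 0 σ) :
    ∀ i j, A i * A j = A j * A i := by
  intro i j
  refine comm_of_traces hA ham {0, i, σ i, j, σ j} (by simp) ?_ i j
    (by simp) (by simp) ?_ ?_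
  · intro x hx
    simp only [Finset.mem_insert, Finset.mem_singleton] at hx ⊢
    rcases hx with rfl | rfl | rfl | rfl | rfl
    · left; exact sigma_zero hA
    · right; right; left; rfl
    · right; left; exact sigma_invol hA _
    · right; right; right; right; rfl
    · right; right; right; left; exact sigma_invol hA _
  · intro l hl
    rw [mul_sub, Matrix.trace_sub, sub_eq_zero]
    simp only [Finset.mem_insert, Finset.mem_singleton] at hl
    rcases hl with rfl | rfl | rfl | rfl | rfl
    · rw [hA.2.2.1, one_mul, one_mul]
      exact Matrix.trace_mul_comm _ _
    · exact trace_rot (pair_comm hA ham _)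
    · exact trace_rot rfl
    · exact trace_rot' (pair_comm hA ham _)
    · exact trace_rot' rfl
  · rw [mul_sub, Matrix.trace_sub, sub_eq_zero]
    exact traceJ_comm hA (σ j) (σ i)
end

section
/- Let G be a connected, non-complete strongly regular graph with parameters (n, k, λ, μ) whose real adjacency matrix has exactly three distinct eigenvalues k, r, s with r ≥ 0 > s, the eigenspaces of r and s having dimensions m_1 and m_2 respectively. If m_1 = m_2, then n = 4μ + 1, k = 2μ, and λ = μ − 1 (that is, G is a conference graph). -/
open Matrix

section SRGConferenceAux

variable {n : ℕ}

noncomputable def evB (A : Matrix (Fin n) (Fin n) ℝ) (hA : A.IsHermitian) :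
    Module.Basis (Fin n) ℝ (Fin n → ℝ) :=
  hA.eigenvectorBasis.toBasis.map (WithLp.linearEquiv 2 ℝ (Fin n → ℝ))

lemma evB_eigen (A : Matrix (Fin n) (Fin n) ℝ) (hA : A.IsHermitian) (j : Fin n) :
    A *ᵥ (evB A hA j) = hA.eigenvalues j • (evB A hA j) := by
  simpa [evB] using hA.mulVec_eigenvectorBasis j

lemma eigenspace_eq_span (A : Matrix (Fin n) (Fin n) ℝ) (hA : A.IsHermitian) (t : ℝ) :
    Module.End.eigenspace A.mulVecLin t
      = Submodule.span ℝ (evB A hA '' {i | hA.eigenvalues i = t}) := by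
  apply le_antisymm
  · intro v hv
    rw [Module.End.mem_eigenspace_iff] at hv
    have hv' : A *ᵥ v = t • v := hv
    have hrepr := Module.Basis.sum_repr (evB A hA) v
    have hco : ∀ i, hA.eigenvalues i ≠ t → (evB A hA).repr v i = 0 := by
      have h1 : A *ᵥ v = ∑ i, ((evB A hA).repr v i * hA.eigenvalues i) • evB A hA i := by
        conv_lhs => rw [← hrepr]
        show A.mulVecLin _ = _
        rw [map_sum]
        refine Finset.sum_congr rfl fun i _ => ?_
        rw [_root_.map_smul, mulVecLin_apply, evB_eigen, smul_smul, mul_comm]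
      have h2 : t • v = ∑ i, (t * (evB A hA).repr v i) • evB A hA i := by
        conv_lhs => rw [← hrepr]
        rw [Finset.smul_sum]
        refine Finset.sum_congr rfl fun i _ => ?_
        rw [smul_smul]
      have h3 := h1.symm.trans (hv'.trans h2)
      intro i hi
      have h4 : ((evB A hA).repr v i * hA.eigenvalues i) = (t * (evB A hA).repr v i) := by
        have := congrArg (fun w => (evB A hA).repr w i) h3
        simpa [map_sum, Finset.sum_apply', Module.Basis.repr_self,
          Finsupp.single_apply] using this
      rw [mul_comm t _] at h4
      rcases mul_eq_mul_left_iff.mp h4 with h | h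
      · exact absurd h hi
      · exact h
    have hv2 : v = ∑ i ∈ Finset.univ.filter (fun i => hA.eigenvalues i = t),
        (evB A hA).repr v i • evB A hA i := by
      rw [Finset.sum_filter_of_ne]
      · exact hrepr.symm
      · intro i _ hne
        by_contra hit
        exact hne (by rw [hco i hit, zero_smul])
    rw [hv2]
    apply Submodule.sum_mem
    intro i hi
    rw [Finset.mem_filter] at hi
    exact Submodule.smul_mem _ _ (Submodule.subset_span ⟨i, hi.2, rfl⟩)
  · rw [Submodule.span_le]
    rintro _ ⟨i, hi, rfl⟩
    rw [SetLike.mem_coe, Module.End.mem_eigenspace_iff]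
    show A *ᵥ _ = _
    rw [evB_eigen, hi]

lemma finrank_eigenspace_eq_card (A : Matrix (Fin n) (Fin n) ℝ) (hA : A.IsHermitian) (t : ℝ) :
    Module.finrank ℝ (Module.End.eigenspace A.mulVecLin t)
      = (Finset.univ.filter (fun i => hA.eigenvalues i = t)).card := by
  rw [eigenspace_eq_span A hA t]
  have h1 : evB A hA '' {i | hA.eigenvalues i = t}
      = Set.range (fun i : {i | hA.eigenvalues i = t} => evB A hA i) := by
    rw [Set.image_eq_range]
  have hli : LinearIndependent ℝ (fun i : {i | hA.eigenvalues i = t} => evB A hA i) :=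
    (evB A hA).linearIndependent.comp _ Subtype.val_injective
  have h2 := finrank_span_eq_card hli
  rw [h1, h2]
  simp [Fintype.card_subtype]

lemma trace_eq_sum_eigenvalues' (A : Matrix (Fin n) (Fin n) ℝ) (hA : A.IsHermitian) :
    Matrix.trace A = ∑ i, hA.eigenvalues i := by
  simpa using hA.trace_eq_sum_eigenvalues

lemma exists_eigenvalue_eq (A : Matrix (Fin n) (Fin n) ℝ) (hA : A.IsHermitian) (t : ℝ)
    (ht : t ∈ spectrum ℝ A) : ∃ i, hA.eigenvalues i = t := by
  have hsp : spectrum ℝ A.mulVecLin = spectrum ℝ A := by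
    have : A.mulVecLin = Matrix.toLinAlgEquiv' A := rfl
    rw [this, AlgEquiv.spectrum_eq]
  have he : Module.End.HasEigenvalue A.mulVecLin t := by
    rw [Module.End.hasEigenvalue_iff_mem_spectrum, hsp]
    exact ht
  have hne : Module.End.eigenspace A.mulVecLin t ≠ ⊥ := he
  rw [eigenspace_eq_span A hA t] at hne
  by_contra hc
  push_neg at hc
  have : {i | hA.eigenvalues i = t} = ∅ := by
    ext i; simp [hc i]
  rw [this] at hne
  simp at hne

lemma srg_quadratic (G : SimpleGraph (Fin n)) [DecidableRel G.Adj] {k l μ : ℕ}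
    (hsrg : G.IsSRGWith n k l μ) (t : ℝ) (hk : (k:ℝ) ≠ t)
    (v : Fin n → ℝ) (hv : v ≠ 0) (hAv : G.adjMatrix ℝ *ᵥ v = t • v) :
    t^2 = ((l:ℝ) - μ) * t + ((k:ℝ) - μ) := by
  set A := G.adjMatrix ℝ with hAdef
  have hσ : ∑ u, v u = 0 := by
    have h1 : ∑ u, (A *ᵥ v) u = (k:ℝ) * ∑ u, v u := by
      calc ∑ u, (A *ᵥ v) u = dotProduct (fun _ => (1:ℝ)) (A *ᵥ v) := by
            simp [dotProduct]
        _ = dotProduct ((fun _ => (1:ℝ)) ᵥ* A) v := dotProduct_mulVec _ _ _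
        _ = ∑ u, (k:ℝ) * v u := by
            unfold dotProduct
            refine Finset.sum_congr rfl fun u _ => ?_
            have : ((fun _ => (1:ℝ)) ᵥ* A) u = (k:ℝ) := by
              rw [hAdef, SimpleGraph.adjMatrix_vecMul_apply]
              simp [hsrg.regular u]
            rw [this]
        _ = (k:ℝ) * ∑ u, v u := by rw [Finset.mul_sum]
    have h2 : ∑ u, (A *ᵥ v) u = t * ∑ u, v u := by
      rw [hAv]; simp [Finset.mul_sum]
    have h3 : ((k:ℝ) - t) * ∑ u, v u = 0 := by
      rw [sub_mul]; rw [h1] at h2; linarith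
    rcases mul_eq_zero.mp h3 with h | h
    · exact absurd (by linarith : (k:ℝ) = t) hk
    · exact h
  set J : Matrix (Fin n) (Fin n) ℝ := Matrix.of (fun _ _ => (1:ℝ)) with hJdef
  have hJ : J *ᵥ v = 0 := by
    funext u; simp [hJdef, mulVec, dotProduct, hσ]
  have hcompl : Gᶜ.adjMatrix ℝ *ᵥ v = -v - t • v := by
    have hmat : Gᶜ.adjMatrix ℝ = J - 1 - A := by
      ext i j
      by_cases hij : i = j
      · subst hij; simp [hAdef, hJdef]
      · by_cases ha : G.Adj i j
        · simp [hAdef, hJdef, ha, Matrix.one_apply_ne hij, hij]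
        · simp [hAdef, hJdef, ha, Matrix.one_apply_ne hij, hij]
    rw [hmat, sub_mulVec, sub_mulVec, hAv, hJ, one_mulVec]
    funext u
    simp
  have hm := hsrg.matrix_eq (α := ℝ)
  have happ := congrArg (fun M => M *ᵥ v) hm
  simp only [← hAdef, add_mulVec, smul_mulVec, one_mulVec, hAv, hcompl] at happ
  have hL : (A^2) *ᵥ v = (t^2) • v := by
    rw [pow_two, ← mulVec_mulVec, hAv, mulVec_smul, hAv, smul_smul, ← pow_two]
  rw [hL] at happ
  have hfin : (t^2 - ((k:ℝ) + l*t - μ - μ*t)) • v = 0 := by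
    rw [sub_smul]
    rw [happ]
    funext u
    simp
    ring
  rcases smul_eq_zero.mp hfin with h | h
  · nlinarith [h]
  · exact absurd h hv

end SRGConferenceAux

/-- A connected, non-complete strongly regular graph whose adjacency matrix has
exactly three distinct real eigenvalues `k, r, s` (`r ≥ 0 > s`) with eigenspace
dimensions `1, m₁, m₂`: if `m₁ = m₂` then `n = 4μ + 1`, `k = 2μ` and
`λ = μ - 1`, i.e. the graph is a conference graph. -/
theorem srg_equal_multiplicities_is_conference_graph
    (n k l μ : ℕ) (G : SimpleGraph (Fin n)) [DecidableRel G.Adj]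
    (hsrg : G.IsSRGWith n k l μ) (hconn : G.Connected) (hnc : G ≠ ⊤)
    (r s : ℝ) (m₁ m₂ : ℕ)
    (hr : 0 ≤ r) (hs : s < 0)
    (hspec : spectrum ℝ (G.adjMatrix ℝ) = {(k : ℝ), r, s})
    (hkr : (k : ℝ) ≠ r) (hks : (k : ℝ) ≠ s)
    (hdimk : Module.finrank ℝ
      (Module.End.eigenspace (G.adjMatrix ℝ).mulVecLin (k : ℝ)) = 1)
    (hdimr : Module.finrank ℝ
      (Module.End.eigenspace (G.adjMatrix ℝ).mulVecLin r) = m₁)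
    (hdims : Module.finrank ℝ
      (Module.End.eigenspace (G.adjMatrix ℝ).mulVecLin s) = m₂)
    (heq : m₁ = m₂) :
    (n : ℝ) = 4 * μ + 1 ∧ (k : ℝ) = 2 * μ ∧ (l : ℝ) = (μ : ℝ) - 1 := by
  classical
  set A := G.adjMatrix ℝ with hAdef
  have hA : A.IsHermitian := by
    ext i j
    simp [hAdef, Matrix.conjTranspose_apply, SimpleGraph.adj_comm]
  set e := hA.eigenvalues with hedef
  have hrs : r ≠ s := by linarith
  set fk := Finset.univ.filter (fun i => e i = (k:ℝ)) with hfk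
  set fr := Finset.univ.filter (fun i => e i = r) with hfr
  set fs := Finset.univ.filter (fun i => e i = s) with hfs
  have hck : fk.card = 1 := (finrank_eigenspace_eq_card A hA (k:ℝ)).symm.trans hdimk
  have hcr : fr.card = m₁ := (finrank_eigenspace_eq_card A hA r).symm.trans hdimr
  have hcs : fs.card = m₂ := (finrank_eigenspace_eq_card A hA s).symm.trans hdims
  have hmem : ∀ i, e i = (k:ℝ) ∨ e i = r ∨ e i = s := by
    intro i
    have h := hA.eigenvalues_mem_spectrum_real i
    rw [hspec] at h
    simpa using h
  have d2 : Disjoint fr fs := by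
    rw [Finset.disjoint_left]
    intro i hi1 hi2
    rw [hfr, Finset.mem_filter] at hi1
    rw [hfs, Finset.mem_filter] at hi2
    exact hrs (hi1.2.symm.trans hi2.2)
  have d1 : Disjoint fk (fr ∪ fs) := by
    rw [Finset.disjoint_left]
    intro i hi1 hi2
    rw [hfk, Finset.mem_filter] at hi1
    rcases Finset.mem_union.mp hi2 with h | h
    · rw [hfr, Finset.mem_filter] at h
      exact hkr (hi1.2.symm.trans h.2)
    · rw [hfs, Finset.mem_filter] at h
      exact hks (hi1.2.symm.trans h.2)
  have hunion : (Finset.univ : Finset (Fin n)) = fk ∪ (fr ∪ fs) := by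
    ext i
    simp only [Finset.mem_union, Finset.mem_univ, true_iff, hfk, hfr, hfs,
      Finset.mem_filter, Finset.mem_univ, true_and]
    exact hmem i
  have hcard : n = 1 + (m₁ + m₂) := by
    have h0 : (Finset.univ : Finset (Fin n)).card = n := by simp
    rw [hunion, Finset.card_union_of_disjoint d1, Finset.card_union_of_disjoint d2,
      hck, hcr, hcs] at h0
    exact h0.symm
  have hsumt : ∀ (t : ℝ), ∑ i ∈ Finset.univ.filter (fun i => e i = t), e i
      = t * (Finset.univ.filter (fun i => e i = t)).card := by
    intro t
    rw [Finset.sum_congr rfl (fun i hi => (Finset.mem_filter.mp hi).2),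
      Finset.sum_const, nsmul_eq_mul, mul_comm]
  have htr : (0:ℝ) = (k:ℝ) * 1 + (r * m₁ + s * m₂) := by
    have h1 : Matrix.trace A = 0 := by simp [hAdef]
    have h2 := trace_eq_sum_eigenvalues' A hA
    have h3 : ∑ i, e i = (k:ℝ) * fk.card + (r * fr.card + s * fs.card) := by
      rw [hunion, Finset.sum_union d1, Finset.sum_union d2, hfk, hfr, hfs,
        hsumt, hsumt, hsumt]
    rw [h1] at h2
    rw [hck, hcr, hcs] at h3
    have h4 : (0:ℝ) = ∑ i, e i := h2
    rw [h4, h3]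
    norm_num
  have hrspec : r ∈ spectrum ℝ A := by
    rw [hspec]; right; left; rfl
  have hsspec : s ∈ spectrum ℝ A := by
    rw [hspec]; right; right; rfl
  obtain ⟨ir, hir⟩ := exists_eigenvalue_eq A hA r hrspec
  obtain ⟨is, his⟩ := exists_eigenvalue_eq A hA s hsspec
  have hqr : r^2 = ((l:ℝ) - μ) * r + ((k:ℝ) - μ) :=
    srg_quadratic G hsrg r hkr (evB A hA ir) ((evB A hA).ne_zero ir)
      (by rw [← hAdef, evB_eigen, hir])
  have hqs : s^2 = ((l:ℝ) - μ) * s + ((k:ℝ) - μ) :=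
    srg_quadratic G hsrg s hks (evB A hA is) ((evB A hA).ne_zero is)
      (by rw [← hAdef, evB_eigen, his])
  have hm1 : 1 ≤ m₁ := by
    rw [← hcr, hfr]
    rw [Nat.succ_le_iff, Finset.card_pos]
    exact ⟨ir, Finset.mem_filter.mpr ⟨Finset.mem_univ _, hir⟩⟩
  -- n ≥ 2
  have hn2 : 2 ≤ n := by
    by_contra h
    push_neg at h
    apply hnc
    ext a b
    have hab : a = b := by
      have := a.isLt; have := b.isLt
      apply Fin.ext
      omega
    simp only [SimpleGraph.top_adj]
    constructor
    · intro hadj; exact (G.ne_of_adj hadj hab).elim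
    · intro hne; exact (hne hab).elim
  -- k ≥ 1
  have hk1 : 1 ≤ k := by
    have v0 : Fin n := ⟨0, by omega⟩
    have v1 : Fin n := ⟨1, by omega⟩
    have hvw : (⟨0, by omega⟩ : Fin n) ≠ ⟨1, by omega⟩ := by
      intro h
      simpa using congrArg Fin.val h
    obtain ⟨p⟩ := hconn.preconnected ⟨0, by omega⟩ ⟨1, by omega⟩
    cases p with
    | cons hadj _ =>
      have hdeg : 0 < G.degree ⟨0, by omega⟩ :=
        G.degree_pos_iff_exists_adj _ |>.mpr ⟨_, hadj⟩
      rw [hsrg.regular _] at hdeg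
      omega
  -- k + 2 ≤ n
  have hkn : k + 2 ≤ n := by
    have hex : ∃ v w : Fin n, v ≠ w ∧ ¬ G.Adj v w := by
      by_contra hc
      push_neg at hc
      apply hnc
      ext a b
      simp only [SimpleGraph.top_adj]
      exact ⟨fun h => G.ne_of_adj h, fun h => hc a b h⟩
    obtain ⟨v, w, hvw, hna⟩ := hex
    have hsubset : G.neighborFinset v ⊆ Finset.univ \ {v, w} := by
      intro u hu
      rw [SimpleGraph.mem_neighborFinset] at hu
      simp only [Finset.mem_sdiff, Finset.mem_univ, true_and, Finset.mem_insert,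
        Finset.mem_singleton]
      push_neg
      constructor
      · intro h; subst h; exact G.ne_of_adj hu rfl
      · intro h; subst h; exact hna hu
    have hc1 := Finset.card_le_card hsubset
    rw [SimpleGraph.card_neighborFinset_eq_degree, hsrg.regular v,
      Finset.card_sdiff_of_subset (Finset.subset_univ _)] at hc1
    have : ({v, w} : Finset (Fin n)).card = 2 := by
      rw [Finset.card_insert_of_notMem (by simpa using hvw), Finset.card_singleton]
    rw [this] at hc1
    simp only [Finset.card_univ, Fintype.card_fin] at hc1
    omega
  -- Vieta
  have hsum_rs : r + s = (l:ℝ) - μ := by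
    have hfac : (r - s) * (r + s - ((l:ℝ) - μ)) = 0 := by linear_combination hqr - hqs
    rcases mul_eq_zero.mp hfac with h | h
    · exact absurd (by linarith : r = s) hrs
    · linarith
  -- k = m₁ (μ - l)
  have hkm : (k:ℝ) = (m₁:ℝ) * ((μ:ℝ) - l) := by
    have h1 : (k:ℝ) + (m₁:ℝ) * (r + s) = 0 := by
      rw [heq] at htr ⊢
      push_cast at htr ⊢
      linarith
    rw [hsum_rs] at h1
    linarith
  have hμl : l < μ := by
    have hk0 : (0:ℝ) < k := by exact_mod_cast hk1
    have hm0 : (0:ℝ) < m₁ := by exact_mod_cast hm1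
    have : (0:ℝ) < (μ:ℝ) - l := by nlinarith
    exact_mod_cast (by linarith : (l:ℝ) < (μ:ℝ))
  have hn1 : n = 2 * m₁ + 1 := by omega
  have hμ : μ = l + 1 := by
    by_contra hne
    have h2μ : l + 2 ≤ μ := by omega
    have h2μ' : (2:ℝ) ≤ (μ:ℝ) - l := by
      have : ((l:ℕ):ℝ) + 2 ≤ ((μ:ℕ):ℝ) := by exact_mod_cast h2μ
      linarith
    have hm0 : (0:ℝ) ≤ m₁ := by positivity
    have hge : ((n:ℝ)) - 1 ≤ (k:ℝ) := by
      have hn1' : (n:ℝ) = 2 * m₁ + 1 := by exact_mod_cast hn1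
      nlinarith
    have : (n:ℝ) ≤ (k:ℝ) + 1 := by linarith
    have : n ≤ k + 1 := by exact_mod_cast this
    omega
  have hk_m : k = m₁ := by
    have : (k:ℝ) = (m₁:ℝ) := by
      rw [hμ] at hkm
      push_cast at hkm
      linarith
    exact_mod_cast this
  have hpe := SimpleGraph.IsSRGWith.param_eq G hsrg (by omega : 0 < n)
  have hn2k : n = 2 * k + 1 := by omega
  have e1 : k - l - 1 = k - μ := by omega
  have e2 : n - k - 1 = k := by omega
  rw [e1, e2] at hpe
  have hkpe : k - μ = μ := Nat.eq_of_mul_eq_mul_left (by omega) hpe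
  have hk2μ : k = 2 * μ := by omega
  have hn4μ : n = 4 * μ + 1 := by omega
  refine ⟨by exact_mod_cast congrArg (Nat.cast : ℕ → ℝ) hn4μ, ?_, ?_⟩
  · push_cast [hk2μ]; ring
  · have : (μ:ℝ) = (l:ℝ) + 1 := by exact_mod_cast hμ
    linarith
end

section
/- Let G be a connected, non-complete strongly regular graph with parameters (n, k, λ, μ) whose real adjacency matrix has exactly three distinct eigenvalues k, r, s with r ≥ 0 > s, the eigenspaces of r and s having dimensions m_1 and m_2 respectively. If k = m_1 then, setting v = r − s and g = −s, one has n = v², k = g(v − 1), λ = (g − 1)(g − 2) + v − 2, and μ = g(g − 1) (that is, G has the parameters of a Latin square type graph L_g(v)). -/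
open Matrix Module LinearMap

lemma sum3' {M : Type*} [AddCommMonoid M] (f : ℝ → M) {a b c : ℝ}
    (hab : a ≠ b) (hac : a ≠ c) (hbc : b ≠ c) :
    ∑ x ∈ ({a, b, c} : Finset ℝ), f x = f a + f b + f c := by
  rw [Finset.sum_insert (by simp [hab, hac]), Finset.sum_insert (by simp [hbc]),
    Finset.sum_singleton, add_assoc]

lemma helper' {E : Type*} [NormedAddCommGroup E] [InnerProductSpace ℝ E] [FiniteDimensional ℝ E]
    (T : Module.End ℝ E) (hT : T.IsSymmetric) (a b c : ℝ)
    (hab : a ≠ b) (hac : a ≠ c) (hbc : b ≠ c)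
    (hset : {μ : ℝ | T.eigenspace μ ≠ ⊥} = {a, b, c}) :
    (finrank ℝ E = finrank ℝ (T.eigenspace a) + finrank ℝ (T.eigenspace b)
        + finrank ℝ (T.eigenspace c)) ∧
    LinearMap.trace ℝ E T = a * finrank ℝ (T.eigenspace a) + b * finrank ℝ (T.eigenspace b)
        + c * finrank ℝ (T.eigenspace c) := by
  have hind : iSupIndep (fun μ : ℝ => T.eigenspace μ) := T.independent_genEigenspace 1
  have htop : (⨆ μ : ℝ, T.eigenspace μ) = ⊤ :=
    Submodule.orthogonal_eq_bot_iff.mp hT.orthogonalComplement_iSup_eigenspaces_eq_bot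
  have hInt : DirectSum.IsInternal (fun μ : ℝ => T.eigenspace μ) :=
    DirectSum.isInternal_submodule_of_iSupIndep_of_iSup_eq_top hind htop
  have hfin : {μ : ℝ | T.eigenspace μ ≠ ⊥}.Finite := by
    rw [hset]; exact (Set.finite_singleton c).insert b |>.insert a
  have htofin : hfin.toFinset = ({a, b, c} : Finset ℝ) := by
    ext x
    rw [Set.Finite.mem_toFinset, hset]
    simp
  have hmapsTo : ∀ μ : ℝ, Set.MapsTo T (T.eigenspace μ) (T.eigenspace μ) := by
    intro μ x hx
    rw [SetLike.mem_coe, Module.End.mem_eigenspace_iff] at hx ⊢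
    rw [hx, _root_.map_smul, hx]
  have htrres : ∀ μ : ℝ, trace ℝ (T.eigenspace μ) (T.restrict (hmapsTo μ))
      = μ * finrank ℝ (T.eigenspace μ) := by
    intro μ
    have h : T.restrict (hmapsTo μ) = μ • LinearMap.id := by
      refine LinearMap.ext fun x => Subtype.ext ?_
      show T (x : E) = μ • (x : E)
      exact Module.End.mem_eigenspace_iff.mp x.2
    rw [h, _root_.map_smul, trace_id]
    simp
  constructor
  · have hInt' : DirectSum.IsInternal
        (fun μ : {x // x ∈ {μ : ℝ | T.eigenspace μ ≠ ⊥}} => T.eigenspace μ.1) :=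
      DirectSum.isInternal_ne_bot_iff.mpr hInt
    haveI : Fintype {x // x ∈ {μ : ℝ | T.eigenspace μ ≠ ⊥}} := hfin.fintype
    have e := LinearEquiv.ofBijective (DirectSum.coeLinearMap _) hInt'
    have h1 : finrank ℝ E
        = ∑ μ : {x // x ∈ {μ : ℝ | T.eigenspace μ ≠ ⊥}}, finrank ℝ (T.eigenspace μ.1) := by
      rw [← e.finrank_eq, finrank_directSum]
    have h2 : ∑ μ : {x // x ∈ {μ : ℝ | T.eigenspace μ ≠ ⊥}}, finrank ℝ (T.eigenspace μ.1)
        = ∑ μ ∈ hfin.toFinset, finrank ℝ (T.eigenspace μ) := by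
      rw [← Finset.sum_coe_sort hfin.toFinset (fun μ => finrank ℝ (T.eigenspace μ))]
      exact Fintype.sum_equiv hfin.subtypeEquivToFinset
        (fun μ => finrank ℝ (T.eigenspace μ.1)) (fun μ => finrank ℝ (T.eigenspace μ.1))
        (fun _ => rfl)
    rw [h1, h2, htofin, sum3' _ hab hac hbc]
  · rw [trace_eq_sum_trace_restrict' hInt hfin hmapsTo]
    simp_rw [htrres]
    rw [htofin, sum3' _ hab hac hbc]

lemma finrank_eig_toEuclideanLin {n : ℕ} (A : Matrix (Fin n) (Fin n) ℝ) (μ : ℝ) :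
    finrank ℝ (Module.End.eigenspace (Matrix.toEuclideanLin A) μ)
      = finrank ℝ (Module.End.eigenspace A.mulVecLin μ) := by
  let e := WithLp.linearEquiv 2 ℝ (Fin n → ℝ)
  have h : (Module.End.eigenspace (Matrix.toEuclideanLin A) μ).map (e : _ →ₗ[ℝ] _)
      = Module.End.eigenspace A.mulVecLin μ := by
    ext y
    simp only [Submodule.mem_map, Module.End.mem_eigenspace_iff]
    constructor
    · rintro ⟨x, hx, rfl⟩
      have := congrArg WithLp.ofLp hx
      rw [WithLp.ofLp_smul] at this
      exact this
    · intro hy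
      refine ⟨WithLp.toLp 2 y, ?_, rfl⟩
      show WithLp.toLp 2 (A *ᵥ y) = _
      rw [← WithLp.toLp_smul]
      exact congrArg _ hy
  rw [← h, LinearEquiv.finrank_map_eq]

/-- A connected, non-complete strongly regular graph whose adjacency matrix has
exactly three distinct real eigenvalues `k, r, s` (`r ≥ 0 > s`) with eigenspace
dimensions `1, m₁, m₂`: if `k = m₁` then, with `v = r - s` and `g = -s`, the
graph has Latin square type parameters `L_g(v)`. -/
theorem srg_k_eq_m1_is_latin_square_type
    (n k l μ : ℕ) (G : SimpleGraph (Fin n)) [DecidableRel G.Adj]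
    (hsrg : G.IsSRGWith n k l μ) (hconn : G.Connected) (hnc : G ≠ ⊤)
    (r s : ℝ) (m₁ m₂ : ℕ)
    (hr : 0 ≤ r) (hs : s < 0)
    (hspec : spectrum ℝ (G.adjMatrix ℝ) = {(k : ℝ), r, s})
    (hkr : (k : ℝ) ≠ r) (hks : (k : ℝ) ≠ s)
    (hdimk : Module.finrank ℝ
      (Module.End.eigenspace (G.adjMatrix ℝ).mulVecLin (k : ℝ)) = 1)
    (hdimr : Module.finrank ℝ
      (Module.End.eigenspace (G.adjMatrix ℝ).mulVecLin r) = m₁)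
    (hdims : Module.finrank ℝ
      (Module.End.eigenspace (G.adjMatrix ℝ).mulVecLin s) = m₂)
    (heq : k = m₁)
    (v g : ℝ) (hv : v = r - s) (hg : g = -s) :
    (n : ℝ) = v ^ 2 ∧ (k : ℝ) = g * (v - 1) ∧
      (l : ℝ) = (g - 1) * (g - 2) + v - 2 ∧ (μ : ℝ) = g * (g - 1) := by
  set A := G.adjMatrix ℝ with hAdef
  -- basic size facts
  have hn2 : 2 ≤ n := by
    by_contra h
    push_neg at h
    apply hnc
    ext a b
    have hab : a = b := by
      have := a.isLt
      have := b.isLt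
      omega
    simp [hab]
  have hn0 : 0 < n := by omega
  have hrs : r ≠ s := by linarith
  have hs0 : s ≠ 0 := ne_of_lt hs
  -- k ≥ 1
  have hk1 : 1 ≤ k := by
    obtain ⟨w⟩ := hconn.preconnected ⟨0, by omega⟩ ⟨1, by omega⟩
    cases w with
    | cons h p =>
      have : 0 < G.degree ⟨0, by omega⟩ :=
        (SimpleGraph.degree_pos_iff_exists_adj G ⟨0, by omega⟩).mpr ⟨_, h⟩
      have := hsrg.regular ⟨0, by omega⟩
      omega
  have hk0 : (0 : ℝ) < k := by
    have : (1 : ℝ) ≤ k := by exact_mod_cast hk1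
    linarith
  -- the operator on Euclidean space
  set T : Module.End ℝ (EuclideanSpace ℝ (Fin n)) := Matrix.toEuclideanLin A with hTdef
  have hsymm : T.IsSymmetric := by
    exact Matrix.isSymmetric_toEuclideanLin_iff.mpr (G.isHermitian_adjMatrix ℝ)
  have hspecT : spectrum ℝ T = {(k : ℝ), r, s} := by
    have h := AlgEquiv.spectrum_eq (Matrix.toLpLinAlgEquiv (R := ℝ) (n := Fin n) 2) A
    rw [hspec] at h
    exact h
  have hset : {μ' : ℝ | T.eigenspace μ' ≠ ⊥} = {(k : ℝ), r, s} := by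
    rw [← hspecT]
    ext μ'
    exact Module.End.hasEigenvalue_iff_mem_spectrum
  obtain ⟨hdim, htr⟩ := helper' T hsymm (k : ℝ) r s hkr hks hrs hset
  -- identify eigenspaces of T with those of mulVecLin
  have hek : finrank ℝ (T.eigenspace (k : ℝ)) = 1 := (finrank_eig_toEuclideanLin A _).trans hdimk
  have her : finrank ℝ (T.eigenspace r) = m₁ := (finrank_eig_toEuclideanLin A _).trans hdimr
  have hes : finrank ℝ (T.eigenspace s) = m₂ := (finrank_eig_toEuclideanLin A _).trans hdims
  rw [hek, her, hes] at hdim htr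
  rw [finrank_euclideanSpace, Fintype.card_fin] at hdim
  have htrA : LinearMap.trace ℝ (EuclideanSpace ℝ (Fin n)) T = 0 := by
    have h0 : LinearMap.trace ℝ (EuclideanSpace ℝ (Fin n)) T = A.trace := by
      show LinearMap.trace ℝ _
        (Matrix.toLin (PiLp.basisFun 2 ℝ (Fin n)) (PiLp.basisFun 2 ℝ (Fin n)) A) = A.trace
      rw [LinearMap.trace_eq_matrix_trace ℝ (PiLp.basisFun 2 ℝ (Fin n)), LinearMap.toMatrix_toLin]
    rw [h0, hAdef, SimpleGraph.trace_adjMatrix]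
  rw [htrA] at htr
  -- key coordinate equation
  have key : ∀ (x : Fin n → ℝ) (ρ : ℝ), A *ᵥ x = ρ • x → ∀ i : Fin n,
      ρ * (ρ * x i) = k * x i + l * (ρ * x i)
        + μ * ((∑ j, x j) - x i - ρ * x i) := by
    intro x ρ hx i
    have meq := hsrg.matrix_eq (α := ℝ)
    have h2 : A *ᵥ (A *ᵥ x) = (k : ℝ) • x + (l : ℝ) • (A *ᵥ x)
        + (μ : ℝ) • ((Gᶜ.adjMatrix ℝ) *ᵥ x) := by
      rw [mulVec_mulVec, ← pow_two, meq, add_mulVec, add_mulVec,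
        smul_mulVec, smul_mulVec, smul_mulVec, one_mulVec,
        Nat.cast_smul_eq_nsmul, Nat.cast_smul_eq_nsmul, Nat.cast_smul_eq_nsmul]
    have h3 : ((Gᶜ.adjMatrix ℝ) *ᵥ x) i = (∑ j, x j) - x i - ρ * x i := by
      rw [SimpleGraph.adjMatrix_mulVec_apply, SimpleGraph.neighborFinset_compl,
        Finset.sum_sdiff_eq_sub (by simp), Finset.sum_singleton]
      have hc := Finset.sum_compl_add_sum (G.neighborFinset i) x
      have hAxi : ∑ u ∈ G.neighborFinset i, x u = ρ * x i := by
        have h5 := congrFun hx i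
        rw [hAdef] at h5
        simp only [SimpleGraph.adjMatrix_mulVec_apply] at h5
        simpa using h5
      linarith
    have hAx2 : A *ᵥ (A *ᵥ x) = ρ • (ρ • x) := by rw [hx, mulVec_smul, hx]
    have h4 := congrFun (hAx2.symm.trans h2) i
    simp only [Pi.add_apply, Pi.smul_apply, smul_eq_mul] at h4
    rw [h3, congrFun hx i] at h4
    simp only [Pi.smul_apply, smul_eq_mul] at h4
    exact h4
  -- column sums
  have hcolsum : ∀ (x : Fin n → ℝ) (ρ : ℝ), A *ᵥ x = ρ • x → ρ ≠ (k : ℝ) →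
      ∑ j, x j = 0 := by
    intro x ρ hx hρ
    have h1 : ∑ i, (A *ᵥ x) i = (k : ℝ) * ∑ j, x j := by
      simp only [mulVec, dotProduct]
      rw [Finset.sum_comm]
      have : ∀ j : Fin n, ∑ i, A i j * x j = (k : ℝ) * x j := by
        intro j
        rw [← Finset.sum_mul]
        congr 1
        have hsym : ∀ i, A i j = A j i := by
          intro i
          simp [hAdef, SimpleGraph.adjMatrix_apply, SimpleGraph.adj_comm]
        calc ∑ i, A i j = ∑ i, A j i := Finset.sum_congr rfl fun i _ => hsym i
          _ = (A *ᵥ Function.const _ (1:ℝ)) j := by simp [mulVec, dotProduct]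
          _ = (k : ℝ) := by
              rw [SimpleGraph.adjMatrix_mulVec_const_apply_of_regular hsrg.regular]
              ring
      rw [Finset.sum_congr rfl fun j _ => this j, ← Finset.mul_sum]
    have h2 : ∑ i, (A *ᵥ x) i = ρ * ∑ j, x j := by
      rw [hx]
      simp [Finset.mul_sum]
    have h3 : (ρ - (k : ℝ)) * ∑ j, x j = 0 := by linarith
    rcases mul_eq_zero.mp h3 with h | h
    · exact absurd (by linarith : ρ = (k : ℝ)) hρ
    · exact h
  -- eigen equations for r and s
  have eigeq : ∀ ρ : ℝ, ρ ≠ (k : ℝ) → Module.End.HasEigenvalue T ρ →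
      ρ ^ 2 = k + l * ρ - μ * (1 + ρ) := by
    intro ρ hρ hev
    obtain ⟨x0, hxmem, hx0'⟩ := hev.exists_hasEigenvector
    set x : Fin n → ℝ := WithLp.ofLp x0 with hxdef
    have hx0 : x ≠ 0 := fun h => hx0' (by
      have := congrArg (WithLp.toLp 2) h
      rw [hxdef, WithLp.toLp_ofLp, WithLp.toLp_zero] at this
      exact this)
    have hx : A *ᵥ x = ρ • x := by
      have := congrArg WithLp.ofLp (Module.End.mem_eigenspace_iff.mp hxmem)
      rw [WithLp.ofLp_smul] at this
      exact this
    have hsum0 : ∑ j, x j = 0 := hcolsum x ρ hx hρ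
    obtain ⟨i, hi⟩ : ∃ i, x i ≠ 0 := by
      by_contra h
      push_neg at h
      exact hx0 (funext h)
    have hk := key x ρ hx i
    rw [hsum0] at hk
    have hfac : (ρ ^ 2 - k - l * ρ + μ * (1 + ρ)) * x i = 0 := by linear_combination hk
    rcases mul_eq_zero.mp hfac with h | h
    · linarith
    · exact absurd h hi
  have hevr : Module.End.HasEigenvalue T r :=
    Module.End.hasEigenvalue_iff_mem_spectrum.mpr (by rw [hspecT]; simp)
  have hevs : Module.End.HasEigenvalue T s :=
    Module.End.hasEigenvalue_iff_mem_spectrum.mpr (by rw [hspecT]; simp)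
  have e1 : r ^ 2 = k + l * r - μ * (1 + r) := eigeq r (Ne.symm hkr) hevr
  have e2 : s ^ 2 = k + l * s - μ * (1 + s) := eigeq s (Ne.symm hks) hevs
  -- equation from the all-ones vector
  have e0 : (k : ℝ) ^ 2 = k + l * k + μ * ((n : ℝ) - 1 - k) := by
    have hone : A *ᵥ (Function.const (Fin n) (1:ℝ)) = (k : ℝ) • Function.const (Fin n) (1:ℝ) := by
      funext i
      rw [SimpleGraph.adjMatrix_mulVec_const_apply_of_regular hsrg.regular]
      simp
    have hk := key (Function.const (Fin n) (1:ℝ)) (k : ℝ) hone ⟨0, hn0⟩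
    simp only [Function.const_apply, mul_one] at hk
    have hsum1 : ∑ _j : Fin n, (1:ℝ) = n := by simp
    rw [hsum1] at hk
    linear_combination hk
  -- assemble real equations
  have edim : (n : ℝ) = 1 + m₁ + m₂ := by exact_mod_cast hdim
  have hm1 : (m₁ : ℝ) = k := by exact_mod_cast heq.symm
  have etr : (k : ℝ) + r * k + s * m₂ = 0 := by
    rw [hm1] at htr
    push_cast at htr
    linarith
  rw [hm1] at edim
  -- algebra
  have hr1 : (0 : ℝ) < 1 + r := by linarith
  have hsum : r + s = l - μ := by
    have h12 : (r - s) * (r + s - (l - μ)) = 0 := by linear_combination e1 - e2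
    rcases mul_eq_zero.mp h12 with h | h
    · exact absurd (by linarith : r = s) hrs
    · linarith
  have hprod : r * s = μ - k := by linear_combination r * hsum - e1
  have hsk : s * (k:ℝ)^2 = s * k + l * k * s - μ * (k + r * k) := by
    linear_combination s * e0 + μ * s * edim + μ * etr
  have hfactor : (k : ℝ) * (1 + r) * (μ - s^2 - s) = 0 := by
    linear_combination hsk - k * s * hsum - s * k * hprod
  have hmu : (μ : ℝ) = s^2 + s := by
    rcases mul_eq_zero.mp hfactor with h | h
    · rcases mul_eq_zero.mp h with h' | h'
      · exact absurd h' (ne_of_gt hk0)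
      · linarith
    · linarith
  have hkval : (k : ℝ) = s^2 + s - r * s := by linear_combination hmu + hprod
  have hlval : (l : ℝ) = s^2 + 2*s + r := by linear_combination -hsum + hmu
  have hns : s * (n : ℝ) = s * (r - s)^2 := by
    linear_combination s * edim + etr + (s - 1 - r) * hkval
  have hn : (n : ℝ) = (r - s)^2 := mul_left_cancel₀ hs0 hns
  subst hv hg
  refine ⟨by linear_combination hn, by linear_combination hkval,
    by linear_combination hlval, by linear_combination hmu⟩
end

section
/- Let G be a connected, non-complete strongly regular graph with parameters (n, k, λ, μ) whose real adjacency matrix has exactly three distinct eigenvalues k, r, s with r ≥ 0 > s, the eigenspaces of r and s having dimensions m_1 and m_2 respectively. If k = m_2 then, setting v = r − s and g = r, one has n = v², k = g(v + 1), λ = (g + 1)(g + 2) − v − 2, and μ = g(g + 1) (that is, G has the parameters of a negative Latin square type graph NL_g(v)). -/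
open Matrix

lemma trace_eq_sum_eig {n : ℕ} {A : Matrix (Fin n) (Fin n) ℝ} (hA : A.IsHermitian) :
    A.trace = ∑ i, hA.eigenvalues i := by
  conv_lhs => rw [hA.spectral_theorem, Unitary.conjStarAlgAut_apply]
  rw [Matrix.trace_mul_cycle,
    (Matrix.mem_unitaryGroup_iff').mp (Matrix.IsHermitian.eigenvectorUnitary hA).2, Matrix.one_mul,
    Matrix.trace_diagonal]
  simp

lemma trace_sq_eq_sum_eig {n : ℕ} {A : Matrix (Fin n) (Fin n) ℝ} (hA : A.IsHermitian) :
    (A * A).trace = ∑ i, (hA.eigenvalues i)^2 := by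
  set U : Matrix (Fin n) (Fin n) ℝ := (Matrix.IsHermitian.eigenvectorUnitary hA : Matrix (Fin n) (Fin n) ℝ) with hU
  set D : Matrix (Fin n) (Fin n) ℝ := Matrix.diagonal (RCLike.ofReal ∘ hA.eigenvalues) with hD
  have hu' : star U * U = 1 := (Matrix.mem_unitaryGroup_iff').mp (Matrix.IsHermitian.eigenvectorUnitary hA).2
  have h1 : A * A = U * (D * D) * star U := by
    conv_lhs => rw [hA.spectral_theorem, Unitary.conjStarAlgAut_apply]
    simp only [← hU, ← hD, Matrix.mul_assoc]
    rw [← Matrix.mul_assoc (star U) U, hu', Matrix.one_mul]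
  rw [h1, Matrix.trace_mul_cycle, ← Matrix.mul_assoc, hu', Matrix.one_mul,
    Matrix.diagonal_mul_diagonal, Matrix.trace_diagonal]
  simp [sq]

lemma card_le_finrank_eig {n : ℕ} {A : Matrix (Fin n) (Fin n) ℝ} (hA : A.IsHermitian) (t : ℝ) :
    (Finset.univ.filter fun i => hA.eigenvalues i = t).card ≤
      Module.finrank ℝ (Module.End.eigenspace A.mulVecLin t) := by
  classical
  set w : Fin n → (Fin n → ℝ) := fun i => ⇑(hA.eigenvectorBasis i) with hw
  have hli : LinearIndependent ℝ w := by
    have h1 := hA.eigenvectorBasis.toBasis.linearIndependent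
    have h2 := h1.map' (WithLp.linearEquiv 2 ℝ (Fin n → ℝ)).toLinearMap
      (LinearEquiv.ker _)
    exact h2
  have hmem : ∀ i, hA.eigenvalues i = t → w i ∈ Module.End.eigenspace A.mulVecLin t := by
    intro i h
    rw [Module.End.mem_eigenspace_iff, Matrix.mulVecLin_apply, hA.mulVec_eigenvectorBasis, h]
  have hu : LinearIndependent ℝ (fun i : {i : Fin n // hA.eigenvalues i = t} =>
      (⟨w i.1, hmem i.1 i.2⟩ : Module.End.eigenspace A.mulVecLin t)) := by
    apply LinearIndependent.of_comp (Module.End.eigenspace A.mulVecLin t).subtype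
    exact hli.comp Subtype.val Subtype.val_injective
  have := hu.fintype_card_le_finrank
  simpa [Fintype.card_subtype] using this

lemma eq_top_of_regular_max {V : Type*} [Fintype V] [DecidableEq V] (G : SimpleGraph V)
    [DecidableRel G.Adj] (h : G.IsRegularOfDegree (Fintype.card V - 1)) : G = ⊤ := by
  ext v w
  simp only [SimpleGraph.top_adj]
  constructor
  · exact fun h' => h'.ne
  · intro hvw
    have h1 : G.neighborFinset v = Finset.univ.erase v := by
      apply Finset.eq_of_subset_of_card_le
      · intro x hx
        rw [Finset.mem_erase]
        exact ⟨((G.mem_neighborFinset v x).mp hx).ne', Finset.mem_univ x⟩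
      · rw [Finset.card_erase_of_mem (Finset.mem_univ v), Finset.card_univ,
          SimpleGraph.card_neighborFinset_eq_degree, h v]
    have : w ∈ G.neighborFinset v := by
      rw [h1, Finset.mem_erase]
      exact ⟨Ne.symm hvw, Finset.mem_univ w⟩
    exact (G.mem_neighborFinset v w).mp this


/-- A connected, non-complete strongly regular graph whose adjacency matrix has
exactly three distinct real eigenvalues `k, r, s` (`r ≥ 0 > s`) with eigenspace
dimensions `1, m₁, m₂`: if `k = m₂` then, with `v = r - s` and `g = r`, the
graph has negative Latin square type parameters `NL_g(v)`. -/
theorem srg_k_eq_m2_is_negative_latin_square_type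
    (n k l μ : ℕ) (G : SimpleGraph (Fin n)) [DecidableRel G.Adj]
    (hsrg : G.IsSRGWith n k l μ) (hconn : G.Connected) (hnc : G ≠ ⊤)
    (r s : ℝ) (m₁ m₂ : ℕ)
    (hr : 0 ≤ r) (hs : s < 0)
    (hspec : spectrum ℝ (G.adjMatrix ℝ) = {(k : ℝ), r, s})
    (hkr : (k : ℝ) ≠ r) (hks : (k : ℝ) ≠ s)
    (hdimk : Module.finrank ℝ
      (Module.End.eigenspace (G.adjMatrix ℝ).mulVecLin (k : ℝ)) = 1)
    (hdimr : Module.finrank ℝ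
      (Module.End.eigenspace (G.adjMatrix ℝ).mulVecLin r) = m₁)
    (hdims : Module.finrank ℝ
      (Module.End.eigenspace (G.adjMatrix ℝ).mulVecLin s) = m₂)
    (heq : k = m₂)
    (v g : ℝ) (hv : v = r - s) (hg : g = r) :
    (n : ℝ) = v ^ 2 ∧ (k : ℝ) = g * (v + 1) ∧
      (l : ℝ) = (g + 1) * (g + 2) - v - 2 ∧ (μ : ℝ) = g * (g + 1) := by
  classical
  subst heq hv hg
  set A := G.adjMatrix ℝ with hAdef
  have hA : A.IsHermitian := by
    rw [Matrix.IsHermitian, conjTranspose]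
    ext i j
    simp [hAdef, SimpleGraph.adjMatrix_apply, SimpleGraph.adj_comm]
  -- basic size facts
  have hn2 : 2 ≤ n := by
    by_contra h
    push_neg at h
    have hsub : Subsingleton (Fin n) := ⟨fun a b => by omega⟩
    apply hnc
    ext a b
    simp only [SimpleGraph.top_adj]
    constructor
    · exact fun h' => h'.ne
    · intro hab; exact absurd (Subsingleton.elim a b) hab
  have hk0 : 0 < k := by
    have h01 : (⟨0, by omega⟩ : Fin n) ≠ ⟨1, by omega⟩ := by simp [Fin.ext_iff]
    obtain ⟨p⟩ := hconn.preconnected ⟨0, by omega⟩ ⟨1, by omega⟩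
    cases p with
    | cons hadj _ =>
      rw [← hsrg.regular ⟨0, by omega⟩, SimpleGraph.degree_pos_iff_exists_adj]
      exact ⟨_, hadj⟩
  have hkn : k < n := by
    have := G.degree_lt_card_verts ⟨0, by omega⟩
    rwa [hsrg.regular ⟨0, by omega⟩, Fintype.card_fin] at this
  have hne : n ≠ k + 1 := by
    intro h
    apply hnc
    apply eq_top_of_regular_max
    have : Fintype.card (Fin n) - 1 = k := by rw [Fintype.card_fin]; omega
    rw [this]
    exact hsrg.regular
  -- eigenvalue counts
  set Fk := Finset.univ.filter (fun i => hA.eigenvalues i = (k:ℝ)) with hFk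
  set Fr := Finset.univ.filter (fun i => hA.eigenvalues i = g) with hFr
  set Fs := Finset.univ.filter (fun i => hA.eigenvalues i = s) with hFs
  have hspec' : ∀ i, hA.eigenvalues i = (k:ℝ) ∨ hA.eigenvalues i = g ∨ hA.eigenvalues i = s := by
    intro i
    have := hA.eigenvalues_mem_spectrum_real i
    rw [hspec] at this
    simpa using this
  have hgs : g ≠ s := by linarith
  have hunion : Fk ∪ Fr ∪ Fs = Finset.univ := by
    ext i
    simp only [hFk, hFr, hFs, Finset.mem_union, Finset.mem_filter, Finset.mem_univ, true_and,
      iff_true]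
    rcases hspec' i with h | h | h
    · exact Or.inl (Or.inl h)
    · exact Or.inl (Or.inr h)
    · exact Or.inr h
  have hd1 : Disjoint Fk Fr := by
    rw [Finset.disjoint_left]
    intro i hi hi'
    simp only [hFk, hFr, Finset.mem_filter] at hi hi'
    exact hkr (hi.2.symm.trans hi'.2)
  have hd2 : Disjoint (Fk ∪ Fr) Fs := by
    rw [Finset.disjoint_left]
    intro i hi hi'
    simp only [hFk, hFr, hFs, Finset.mem_union, Finset.mem_filter] at hi hi'
    rcases hi with h | h
    · exact hks (h.2.symm.trans hi'.2)
    · exact hgs (h.2.symm.trans hi'.2)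
  have hcount : Fk.card + Fr.card + Fs.card = n := by
    rw [← Finset.card_union_of_disjoint hd1, ← Finset.card_union_of_disjoint hd2, hunion,
      Finset.card_univ, Fintype.card_fin]
  -- trace identities
  have htr0 : (k:ℝ) * Fk.card + g * Fr.card + s * Fs.card = 0 := by
    have hT : ∑ i, hA.eigenvalues i = 0 := by
      rw [← trace_eq_sum_eig hA, hAdef, SimpleGraph.trace_adjMatrix]
    rw [← hT, ← hunion, Finset.sum_union hd2, Finset.sum_union hd1]
    have e1 : ∑ i ∈ Fk, hA.eigenvalues i = (k:ℝ) * Fk.card := by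
      rw [Finset.sum_congr rfl (fun i hi => (Finset.mem_filter.mp hi).2), Finset.sum_const,
        nsmul_eq_mul, mul_comm]
    have e2 : ∑ i ∈ Fr, hA.eigenvalues i = g * Fr.card := by
      rw [Finset.sum_congr rfl (fun i hi => (Finset.mem_filter.mp hi).2), Finset.sum_const,
        nsmul_eq_mul, mul_comm]
    have e3 : ∑ i ∈ Fs, hA.eigenvalues i = s * Fs.card := by
      rw [Finset.sum_congr rfl (fun i hi => (Finset.mem_filter.mp hi).2), Finset.sum_const,
        nsmul_eq_mul, mul_comm]
    rw [e1, e2, e3]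
  have htr2 : (k:ℝ)^2 * Fk.card + g^2 * Fr.card + s^2 * Fs.card = (n:ℝ) * k := by
    have hT : ∑ i, (hA.eigenvalues i)^2 = (n:ℝ) * k := by
      rw [← trace_sq_eq_sum_eig hA, hAdef]
      rw [Matrix.trace]
      have : ∀ i, (G.adjMatrix ℝ * G.adjMatrix ℝ).diag i = (k:ℝ) := by
        intro i
        rw [Matrix.diag_apply, SimpleGraph.adjMatrix_mul_self_apply_self, hsrg.regular i]
      rw [Finset.sum_congr rfl (fun i _ => this i), Finset.sum_const, nsmul_eq_mul,
        Finset.card_univ, Fintype.card_fin]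
    rw [← hT, ← hunion, Finset.sum_union hd2, Finset.sum_union hd1]
    have e1 : ∑ i ∈ Fk, (hA.eigenvalues i)^2 = (k:ℝ)^2 * Fk.card := by
      rw [Finset.sum_congr rfl (fun i hi => by rw [(Finset.mem_filter.mp hi).2]),
        Finset.sum_const, nsmul_eq_mul, mul_comm]
    have e2 : ∑ i ∈ Fr, (hA.eigenvalues i)^2 = g^2 * Fr.card := by
      rw [Finset.sum_congr rfl (fun i hi => by rw [(Finset.mem_filter.mp hi).2]),
        Finset.sum_const, nsmul_eq_mul, mul_comm]
    have e3 : ∑ i ∈ Fs, (hA.eigenvalues i)^2 = s^2 * Fs.card := by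
      rw [Finset.sum_congr rfl (fun i hi => by rw [(Finset.mem_filter.mp hi).2]),
        Finset.sum_const, nsmul_eq_mul, mul_comm]
    rw [e1, e2, e3]
  -- finrank bounds
  have hck : Fk.card ≤ 1 := hdimk ▸ card_le_finrank_eig hA (k:ℝ)
  have hcr : Fr.card ≤ m₁ := hdimr ▸ card_le_finrank_eig hA g
  have hcs : Fs.card ≤ k := hdims ▸ card_le_finrank_eig hA s
  -- sum of eigenspace dims ≤ n
  set Ek := Module.End.eigenspace A.mulVecLin (k:ℝ) with hEk
  set Er := Module.End.eigenspace A.mulVecLin g with hEr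
  set Es := Module.End.eigenspace A.mulVecLin s with hEs
  have hind := Module.End.eigenspaces_iSupIndep A.mulVecLin
  have hd_kr : Disjoint Ek Er := hind.pairwiseDisjoint hkr
  have hd_sup : Disjoint (Ek ⊔ Er) Es := by
    refine Disjoint.mono_left ?_ (hind s).symm
    apply sup_le
    · exact le_iSup₂ (f := fun j (_ : j ≠ s) => Module.End.eigenspace A.mulVecLin j) (k:ℝ) hks
    · exact le_iSup₂ (f := fun j (_ : j ≠ s) => Module.End.eigenspace A.mulVecLin j) g hgs
  have hle : 1 + m₁ + k ≤ n := by
    have t1 : Module.finrank ℝ (Ek ⊔ Er : Submodule ℝ (Fin n → ℝ)) =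
        Module.finrank ℝ Ek + Module.finrank ℝ Er := by
      have := Submodule.finrank_sup_add_finrank_inf_eq Ek Er
      rw [hd_kr.eq_bot, finrank_bot] at this
      omega
    have t2 := Submodule.finrank_add_finrank_le_of_disjoint hd_sup
    rw [t1, hdimk, hdimr, hdims] at t2
    have t3 : Module.finrank ℝ (Fin n → ℝ) = n := by
      rw [Module.finrank_pi ℝ, Fintype.card_fin]
    omega
  have hcke : Fk.card = 1 := by omega
  have hcre : Fr.card = m₁ := by omega
  have hcse : Fs.card = k := by omega
  have hE1 : n = 1 + m₁ + k := by omega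
  have hm1pos : 0 < m₁ := by omega
  -- the quadratic equation satisfied by eigenvalues ≠ k
  have hquad : ∀ t : ℝ, t ≠ (k:ℝ) → (∃ i, hA.eigenvalues i = t) →
      t^2 = (k:ℝ) - μ + ((l:ℝ) - μ) * t := by
    rintro t ht ⟨i, hi⟩
    obtain ⟨x, hx, hx0⟩ : ∃ x : Fin n → ℝ, A *ᵥ x = t • x ∧ x ≠ 0 := by
      refine ⟨⇑(hA.eigenvectorBasis i), by rw [hA.mulVec_eigenvectorBasis, hi], ?_⟩
      intro h0
      have h1 : ‖hA.eigenvectorBasis i‖ = 1 := hA.eigenvectorBasis.orthonormal.1 i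
      have h2 : hA.eigenvectorBasis i = 0 := by
        apply PiLp.ext
        intro j
        exact congrFun h0 j
      rw [h2, norm_zero] at h1
      norm_num at h1
    -- column sums of A are k
    have hcol : ∀ j : Fin n, ∑ i', A i' j = (k:ℝ) := by
      intro j
      have h1 : ∀ i', A i' j = A j i' := by
        intro i'
        simp [hAdef, SimpleGraph.adjMatrix_apply, SimpleGraph.adj_comm]
      rw [Finset.sum_congr rfl (fun i' _ => h1 i')]
      show ∑ i', G.adjMatrix ℝ j i' = (k:ℝ); simp only [SimpleGraph.adjMatrix_apply, Finset.sum_boole]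
      rw [← SimpleGraph.neighborFinset_eq_filter, SimpleGraph.card_neighborFinset_eq_degree,
        hsrg.regular j]
    have hsum : ∑ j, x j = 0 := by
      have h1 : ∑ i', (A *ᵥ x) i' = (k:ℝ) * ∑ j, x j := by
        simp only [Matrix.mulVec, dotProduct]
        rw [Finset.sum_comm, Finset.mul_sum]
        apply Finset.sum_congr rfl
        intro j _
        rw [← Finset.sum_mul, hcol j]
      have h2 : ∑ i', (A *ᵥ x) i' = t * ∑ j, x j := by
        rw [hx]
        simp [Finset.mul_sum]
      have h3 : ((k:ℝ) - t) * ∑ j, x j = 0 := by rw [sub_mul]; rw [h1] at h2; linarith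
      rcases mul_eq_zero.mp h3 with h | h
      · exact (ht (by linarith)).elim
      · exact h
    have hJ : (Matrix.of (fun _ _ => (1:ℝ)) : Matrix (Fin n) (Fin n) ℝ) *ᵥ x = 0 := by
      funext i'
      simp [Matrix.mulVec, dotProduct, hsum]
    have hCeq : Gᶜ.adjMatrix ℝ = (Matrix.of (fun _ _ => (1:ℝ)) : Matrix (Fin n) (Fin n) ℝ) - 1 - A := by
      ext i' j
      by_cases h : i' = j
      · subst h
        simp [hAdef, SimpleGraph.adjMatrix_apply, Matrix.one_apply]
      · by_cases ha : G.Adj i' j <;>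
          simp [hAdef, SimpleGraph.adjMatrix_apply, SimpleGraph.compl_adj, h, ha, Matrix.one_apply]
    have hCx : Gᶜ.adjMatrix ℝ *ᵥ x = -x - t • x := by
      rw [hCeq, Matrix.sub_mulVec, Matrix.sub_mulVec, Matrix.one_mulVec, hJ, hx]
      funext j
      simp
    have hmain := hsrg.matrix_eq (α := ℝ)
    have key : (t * t) • x = (k:ℝ) • x + (l:ℝ) • (t • x) + (μ:ℝ) • (-x - t • x) := by
      calc (t * t) • x = (G.adjMatrix ℝ ^ 2) *ᵥ x := by
            rw [pow_two, ← Matrix.mulVec_mulVec, ← hAdef, hx, Matrix.mulVec_smul, hx, smul_smul]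
        _ = (k • (1 : Matrix (Fin n) (Fin n) ℝ) + l • G.adjMatrix ℝ + μ • Gᶜ.adjMatrix ℝ) *ᵥ x := by
            rw [hmain]
        _ = (k:ℝ) • x + (l:ℝ) • (t • x) + (μ:ℝ) • (-x - t • x) := by
            rw [Matrix.add_mulVec, Matrix.add_mulVec]
            congr 1
            · congr 1
              · rw [← Nat.cast_smul_eq_nsmul ℝ k (1 : Matrix (Fin n) (Fin n) ℝ),
                  Matrix.smul_mulVec, Matrix.one_mulVec]
              · rw [← Nat.cast_smul_eq_nsmul ℝ l (G.adjMatrix ℝ), Matrix.smul_mulVec,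
                  ← hAdef, hx]
            · rw [← Nat.cast_smul_eq_nsmul ℝ μ (Gᶜ.adjMatrix ℝ), Matrix.smul_mulVec, hCx]
    obtain ⟨j, hj⟩ : ∃ j, x j ≠ 0 := Function.ne_iff.mp hx0
    have hkey := congrFun key j
    simp only [Pi.smul_apply, Pi.add_apply, Pi.sub_apply, Pi.neg_apply, smul_eq_mul] at hkey
    have hfac : (t^2 - ((k:ℝ) - μ + ((l:ℝ) - μ) * t)) * x j = 0 := by
      ring_nf
      ring_nf at hkey
      linarith
    rcases mul_eq_zero.mp hfac with h | h
    · linarith [sub_eq_zero.mp h]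
    · exact absurd h hj
  -- quadratic for g and s
  have hqg : g^2 = (k:ℝ) - μ + ((l:ℝ) - μ) * g := by
    apply hquad g (Ne.symm hkr)
    have hpos : 0 < Fr.card := by omega
    obtain ⟨i, hi⟩ := Finset.card_pos.mp hpos
    exact ⟨i, (Finset.mem_filter.mp hi).2⟩
  have hqs : s^2 = (k:ℝ) - μ + ((l:ℝ) - μ) * s := by
    apply hquad s (Ne.symm hks)
    have hpos : 0 < Fs.card := by omega
    obtain ⟨i, hi⟩ := Finset.card_pos.mp hpos
    exact ⟨i, (Finset.mem_filter.mp hi).2⟩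
  have hKne : (k:ℝ) ≠ 0 := by
    have : (0:ℝ) < (k:ℝ) := by exact_mod_cast hk0
    linarith
  have hsum_rs : g + s = (l:ℝ) - μ := by
    apply mul_right_cancel₀ (sub_ne_zero.mpr hgs)
    linear_combination hqg - hqs
  have hprod_rs : g * s = (μ:ℝ) - k := by
    linear_combination g * hsum_rs - hqg
  have hcastN : (n:ℝ) = 1 + (m₁:ℝ) + k := by rw [hE1]; push_cast; ring
  rw [hcke, hcre, hcse] at htr0 htr2
  push_cast at htr0 htr2
  have h1 : (m₁:ℝ) * g + (k:ℝ) * (1 + s) = 0 := by linear_combination htr0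
  have hnne : (n:ℝ) ≠ (k:ℝ) + 1 := by
    intro h
    exact hne (by exact_mod_cast h)
  by_cases hg0 : g = 0
  · exfalso
    have hs1 : s = -1 := by
      have h2 : (k:ℝ) * (1 + s) = 0 := by rw [hg0] at h1; linarith
      rcases mul_eq_zero.mp h2 with h | h
      · exact absurd h hKne
      · linarith
    apply hnne
    apply mul_right_cancel₀ hKne
    rw [hg0, hs1] at htr2
    linear_combination -htr2
  · have hgpos : 0 < g := lt_of_le_of_ne hr (Ne.symm hg0)
    by_cases hs1 : s = -1
    · exfalso
      have h2 : (m₁:ℝ) * g = 0 := by rw [hs1] at h1; linarith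
      rcases mul_eq_zero.mp h2 with h | h
      · have : m₁ = 0 := by exact_mod_cast h
        omega
      · exact hg0 h
    · have hs1' : (1:ℝ) + s ≠ 0 := fun h => hs1 (by linarith)
      have key : (1 + s) * ((k:ℝ) - g * (1 + g - s)) * (k:ℝ) = 0 := by
        linear_combination g * htr2 + (g * (k:ℝ)) * hcastN + ((k:ℝ) - g^2) * h1
      have hK : (k:ℝ) = g * (1 + g - s) := by
        rcases mul_eq_zero.mp key with h | h
        · rcases mul_eq_zero.mp h with h' | h'
          · exact absurd h' hs1'
          · linarith [sub_eq_zero.mp h']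
        · exact absurd h hKne
      have hM1 : (m₁:ℝ) = -(1 + g - s) * (1 + s) := by
        have h4 : ((m₁:ℝ) + (1 + g - s) * (1 + s)) * g = 0 := by
          linear_combination h1 - (1 + s) * hK
        rcases mul_eq_zero.mp h4 with h | h
        · linarith
        · exact absurd h hg0
      have hμ : (μ:ℝ) = g * (g + 1) := by linear_combination hK - hprod_rs
      refine ⟨?_, ?_, ?_, ?_⟩
      · rw [hcastN, hM1, hK]; ring
      · rw [hK]; ring
      · have hl : (l:ℝ) = g + s + μ := by linear_combination -hsum_rs
        rw [hl, hμ]; ring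
      · exact hμ
end

section
/- Let A_0 = I, A_1, A_2 = A_1ᵀ be a non-symmetric association scheme with 2 classes on n vertices (equivalently, A_1 is the adjacency matrix of a doubly regular tournament), and let k be the constant row sum of A_1. Then n = 2k + 1 and the set of complex eigenvalues of the complexification of A_1 is exactly {k, (−1 + i·√n)/2, (−1 − i·√n)/2}. -/
open Matrix BigOperators

/-- A non-symmetric association scheme with 2 classes (equivalently, a doubly
regular tournament) has `n = 2k + 1` vertices, and the complex eigenvalues of
`A₁` are exactly `k, (-1 + i√n)/2, (-1 - i√n)/2`. -/
theorem two_class_nonsymmetric_eigenvalues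
    (n : ℕ)
    (A : Fin 3 → Matrix (Fin n) (Fin n) ℝ) (σ : Fin 3 → Fin 3)
    (hA : IsAssocScheme n A 0 σ)
    (h12 : A 2 = (A 1)ᵀ)
    (hns : A 1 ≠ (A 1)ᵀ)
    (k : ℝ) (hk : ∀ x, ∑ y, A 1 x y = k) :
    (n : ℝ) = 2 * k + 1 ∧
    spectrum ℂ ((A 1).map Complex.ofReal) =
      {(k : ℂ), (-1 + Complex.I * (Real.sqrt n : ℝ)) / 2,
        (-1 - Complex.I * (Real.sqrt n : ℝ)) / 2} := by
  obtain ⟨hne, h01, he, hsum, hTr, hprod⟩ := hA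
  set J : Matrix (Fin n) (Fin n) ℝ := Matrix.of (fun _ _ => (1 : ℝ)) with hJdef
  -- n ≠ 0
  have hn0 : 0 < n := by
    rcases Nat.eq_zero_or_pos n with h | h
    · subst h
      exact absurd (Subsingleton.elim (A 1) 0) (hne 1)
    · exact h
  have x0 : Fin n := ⟨0, hn0⟩
  -- partition identity, entrywise
  have hJ : ∀ x y, (1 : Matrix (Fin n) (Fin n) ℝ) x y + A 1 x y + A 1 y x = 1 := by
    intro x y
    have := congrFun (congrFun hsum x) y
    rw [Fin.sum_univ_three] at this
    simp only [Matrix.add_apply, he, h12, Matrix.transpose_apply] at this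
    simpa [J] using this
  have hdiag : ∀ x, A 1 x x = 0 := by
    intro x
    have := hJ x x
    simp [Matrix.one_apply_eq] at this
    linarith
  have hopp : ∀ x y, A 1 x y * A 1 y x = 0 := by
    intro x y
    rcases h01 1 x y with h | h
    · simp [h]
    rcases h01 1 y x with h' | h'
    · simp [h']
    by_cases hxy : x = y
    · subst hxy; simp [hdiag x] at h
    · have := hJ x y
      rw [Matrix.one_apply_ne hxy, h, h'] at this
      norm_num at this
  -- entries nonneg
  have hnonneg : ∀ x y, 0 ≤ A 1 x y := by
    intro x y; rcases h01 1 x y with h | h <;> simp [h]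
  -- k positive
  have hkpos : 0 < k := by
    have hA1 := hne 1
    have : ∃ x y, A 1 x y ≠ 0 := by
      by_contra h
      push_neg at h
      exact hA1 (by ext x y; simpa using h x y)
    obtain ⟨x, y, hxy⟩ := this
    have h1 : A 1 x y = 1 := (h01 1 x y).resolve_left hxy
    have : (1:ℝ) ≤ ∑ y', A 1 x y' := by
      calc (1:ℝ) = A 1 x y := h1.symm
      _ ≤ ∑ y', A 1 x y' := Finset.single_le_sum (fun i _ => hnonneg x i) (Finset.mem_univ y)
    rw [hk x] at this; linarith
  -- column sums
  have hcol : ∀ y, ∑ x, A 1 x y = (n : ℝ) - 1 - k := by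
    intro y
    have : ∑ x, A 1 x y = ∑ x, (1 - (1 : Matrix (Fin n) (Fin n) ℝ) x y - A 1 y x) := by
      apply Finset.sum_congr rfl
      intro x _
      have := hJ x y
      linarith
    rw [this]
    simp [Finset.sum_sub_distrib, hk y]
    simp [Matrix.one_apply]
  -- n = 2k+1
  have hn : (n : ℝ) = 2 * k + 1 := by
    have h1 : ∑ x, ∑ y, A 1 x y = (n:ℝ) * k := by
      simp [hk, Finset.sum_const, mul_comm]
    have h2 : ∑ y, ∑ x, A 1 x y = (n:ℝ) * ((n:ℝ) - 1 - k) := by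
      simp [hcol, Finset.sum_const]; ring
    rw [show ∑ x, ∑ y, A 1 x y = ∑ y, ∑ x, A 1 x y from Finset.sum_comm] at h1
    have hne' : (n:ℝ) ≠ 0 := by positivity
    have := h1.symm.trans h2
    have : k = (n:ℝ) - 1 - k := by
      field_simp at this
      linarith
    linarith
  have hcolk : ∀ y, ∑ x, A 1 x y = k := by
    intro y; rw [hcol y, hn]; ring
  -- product structure
  obtain ⟨p, hp⟩ := hprod 1 1
  rw [Fin.sum_univ_three, he, h12] at hp
  set a : ℝ := (p 1 : ℝ) with hadef
  set b : ℝ := (p 2 : ℝ) with hbdef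
  -- p 0 = 0
  have hp0 : (p 0 : ℝ) = 0 := by
    have := congrFun (congrFun hp x0) x0
    rw [Matrix.mul_apply] at this
    simp only [Matrix.add_apply, Matrix.smul_apply, Matrix.transpose_apply,
      Matrix.one_apply_eq, hdiag x0, smul_eq_mul, mul_zero, mul_one, add_zero] at this
    rw [Finset.sum_eq_zero (fun y _ => hopp x0 y)] at this
    linarith
  have hp' : A 1 * A 1 = a • A 1 + b • (A 1)ᵀ := by
    rw [hp, hp0]; simp
  -- row sums give a + b = k
  have hab : a + b = k := by
    have h1 : ∑ y, (A 1 * A 1) x0 y = k * k := by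
      simp only [Matrix.mul_apply]
      rw [Finset.sum_comm]
      calc ∑ z, ∑ y, A 1 x0 z * A 1 z y
          = ∑ z, A 1 x0 z * k := by
            apply Finset.sum_congr rfl; intro z _; rw [← Finset.mul_sum, hk z]
        _ = k * k := by rw [← Finset.sum_mul, hk x0]
    have h2 : ∑ y, (a • A 1 + b • (A 1)ᵀ) x0 y = a * k + b * k := by
      simp only [Matrix.add_apply, Matrix.smul_apply, Matrix.transpose_apply, smul_eq_mul]
      rw [Finset.sum_add_distrib, ← Finset.mul_sum, ← Finset.mul_sum, hk x0, hcolk x0]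
    rw [hp'] at h1
    rw [h2] at h1
    have : (a + b) * k = k * k := by ring_nf; ring_nf at h1; linarith
    exact mul_right_cancel₀ hkpos.ne' (by linarith [this] : (a+b)*k = k*k)
  -- symmetry gives b = a + 1
  have hT : (A 1)ᵀ = J - 1 - A 1 := by
    ext x y
    simp only [Matrix.transpose_apply, Matrix.sub_apply]
    have := hJ x y
    have hJxy : J x y = 1 := rfl
    linarith
  have hJ1 : A 1 * J = k • J := by
    ext x y
    simp [Matrix.mul_apply, J, Matrix.smul_apply, hk x]
  have hJ2 : J * A 1 = k • J := by
    ext x y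
    simp [Matrix.mul_apply, J, Matrix.smul_apply, hcolk y]
  have hsymmAAT : (A 1 * (A 1)ᵀ)ᵀ = A 1 * (A 1)ᵀ := by
    rw [Matrix.transpose_mul, Matrix.transpose_transpose]
  have hba : b = a + 1 := by
    have hAAT : A 1 * (A 1)ᵀ = (k - b) • J + b • 1 - (1 + a - b) • A 1 := by
      rw [hT]
      rw [Matrix.mul_sub, Matrix.mul_sub, hJ1, Matrix.mul_one, hp', hT]
      module
    have := hsymmAAT
    rw [hAAT] at this
    have hJT : Jᵀ = J := by ext x y; rfl
    rw [Matrix.transpose_sub, Matrix.transpose_add, Matrix.transpose_smul,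
      Matrix.transpose_smul, Matrix.transpose_smul, hJT, Matrix.transpose_one] at this
    have hz : (1 + a - b) • (A 1 - (A 1)ᵀ) = 0 := by
      have : (k - b) • J + b • 1 - (1 + a - b) • (A 1)ᵀ
          - ((k - b) • J + b • 1 - (1 + a - b) • A 1) = 0 := by rw [this]; abel
      rw [← this]; module
    rcases smul_eq_zero.mp hz with h | h
    · linarith
    · exact absurd (sub_eq_zero.mp h) hns
  have hbval : b = (k + 1) / 2 := by linarith
  -- final real identity
  have hReal : A 1 * A 1 + A 1 + b • 1 = b • J := by
    rw [hp', hT]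
    have : a = b - 1 := by linarith
    rw [this]
    module
  -- complexification
  set s : ℝ := Real.sqrt n with hsdef
  set B : Matrix (Fin n) (Fin n) ℂ := (A 1).map Complex.ofReal with hBdef
  set Jc : Matrix (Fin n) (Fin n) ℂ := Matrix.of (fun _ _ => (1:ℂ)) with hJcdef
  set lam1 : ℂ := (-1 + Complex.I * (s:ℝ)) / 2 with hl1def
  set lam2 : ℂ := (-1 - Complex.I * (s:ℝ)) / 2 with hl2def
  set c : ℂ := ((k:ℂ) + 1)/2 with hcdef
  have hBapply : ∀ x y, B x y = ((A 1 x y : ℝ) : ℂ) := fun x y => rfl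
  have hCB : B * B + B + c • 1 = c • Jc := by
    ext x y
    have h := congrArg Complex.ofReal (congrFun (congrFun hReal x) y)
    simp only [Matrix.add_apply, Matrix.mul_apply, Matrix.smul_apply, Matrix.one_apply,
      smul_eq_mul, Complex.ofReal_add, Complex.ofReal_mul, Complex.ofReal_sum] at h ⊢
    rw [hbval] at h
    by_cases hxy : x = y <;>
      simp only [hxy, if_true, if_false, mul_one, mul_zero, add_zero, hBapply,
        hJcdef, hJdef, Matrix.of_apply, Complex.ofReal_one, Complex.ofReal_zero] at h ⊢ <;>
      · rw [hcdef]
        push_cast at h ⊢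
        linear_combination h
  have hBJc : B * Jc = (k:ℂ) • Jc := by
    ext x y
    simp only [Matrix.mul_apply, hJcdef, Matrix.of_apply, Matrix.smul_apply, mul_one,
      smul_eq_mul, hBapply]
    rw [← Complex.ofReal_sum, hk x]
  have hq : (B - (k:ℂ) • 1) * (B * B + B + c • 1) = 0 := by
    rw [hCB, Matrix.mul_smul, Matrix.sub_mul, Matrix.smul_mul, Matrix.one_mul, hBJc]
    simp
  -- spectrum membership characterization
  have hmem : ∀ μ : ℂ, μ ∈ spectrum ℂ B ↔ (μ • (1 : Matrix (Fin n) (Fin n) ℂ) - B).det = 0 := by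
    intro μ
    rw [spectrum.mem_iff, Algebra.algebraMap_eq_smul_one, Matrix.isUnit_iff_isUnit_det,
      isUnit_iff_ne_zero, not_not]
  have hkspec : (k:ℂ) ∈ spectrum ℂ B := by
    rw [hmem, ← Matrix.exists_mulVec_eq_zero_iff]
    refine ⟨fun _ => 1, ?_, ?_⟩
    · intro hcon
      have := congrFun hcon x0
      simp at this
    · funext x
      simp only [Matrix.mulVec, dotProduct, Matrix.sub_apply, Matrix.smul_apply,
        Matrix.one_apply, smul_eq_mul, mul_one, Pi.zero_apply, hBapply]
      rw [Finset.sum_sub_distrib, ← Complex.ofReal_sum, hk x]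
      simp [Finset.sum_ite_eq]
  -- factorization of the quadratic
  have hs2 : ((s:ℝ):ℂ)^2 = (n:ℂ) := by
    rw [← Complex.ofReal_pow, hsdef, Real.sq_sqrt (Nat.cast_nonneg n)]
    norm_cast
  have hnC : (n:ℂ) = 2*(k:ℂ) + 1 := by exact_mod_cast hn
  have hfact : ∀ μ : ℂ, μ*μ + μ + c = (μ - lam1) * (μ - lam2) := by
    intro μ
    rw [hcdef, hl1def, hl2def]
    have hI : Complex.I^2 = -1 := Complex.I_sq
    linear_combination (((s:ℝ):ℂ)^2/4) * hI - (1/4:ℂ) * hs2 - (1/4:ℂ) * hnC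
  have hsub : ∀ μ ∈ spectrum ℂ B, μ = (k:ℂ) ∨ μ = lam1 ∨ μ = lam2 := by
    intro μ hμ
    rw [hmem, ← Matrix.exists_mulVec_eq_zero_iff] at hμ
    obtain ⟨v, hv0, hv⟩ := hμ
    have hBv : B *ᵥ v = μ • v := by
      rw [Matrix.sub_mulVec, Matrix.smul_mulVec, Matrix.one_mulVec] at hv
      have := sub_eq_zero.mp hv
      exact this.symm
    have hinner : (B * B + B + c • 1) *ᵥ v = (μ*μ + μ + c) • v := by
      rw [Matrix.add_mulVec, Matrix.add_mulVec, ← Matrix.mulVec_mulVec, hBv,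
        Matrix.mulVec_smul, hBv, Matrix.smul_mulVec, Matrix.one_mulVec]
      rw [smul_smul]
      module
    have h0 : ((μ*μ + μ + c) * (μ - (k:ℂ))) • v = 0 := by
      have := congrArg (fun M => M *ᵥ v) hq
      simp only [Matrix.zero_mulVec] at this
      rw [← Matrix.mulVec_mulVec, hinner, Matrix.mulVec_smul, Matrix.sub_mulVec,
        Matrix.smul_mulVec, Matrix.one_mulVec, hBv] at this
      rw [← this]
      module
    have hscal : (μ*μ + μ + c) * (μ - (k:ℂ)) = 0 := by
      rcases smul_eq_zero.mp h0 with h | h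
      · exact h
      · exact absurd h hv0
    rw [hfact μ] at hscal
    rcases mul_eq_zero.mp hscal with h | h
    · rcases mul_eq_zero.mp h with h' | h'
      · exact Or.inr (Or.inl (sub_eq_zero.mp h'))
      · exact Or.inr (Or.inr (sub_eq_zero.mp h'))
    · exact Or.inl (sub_eq_zero.mp h)
  -- conjugation invariance
  have hconj : ∀ μ : ℂ, μ ∈ spectrum ℂ B → (starRingEnd ℂ) μ ∈ spectrum ℂ B := by
    intro μ hμ
    rw [hmem] at hμ ⊢
    have hmap : ((starRingEnd ℂ) μ • (1 : Matrix (Fin n) (Fin n) ℂ) - B)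
        = (μ • (1 : Matrix (Fin n) (Fin n) ℂ) - B).map (starRingEnd ℂ) := by
      ext x y
      simp only [Matrix.map_apply, Matrix.sub_apply, Matrix.smul_apply, Matrix.one_apply,
        smul_eq_mul, map_sub, _root_.map_mul, hBapply, Complex.conj_ofReal]
      by_cases hxy : x = y <;> simp [hxy]
    have : (μ • (1 : Matrix (Fin n) (Fin n) ℂ) - B).map (starRingEnd ℂ)
        = (starRingEnd ℂ).mapMatrix (μ • (1 : Matrix (Fin n) (Fin n) ℂ) - B) := rfl
    rw [hmap, this, ← RingHom.map_det, hμ, map_zero]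
  -- B is not a scalar matrix
  have hBk : B ≠ (k:ℂ) • 1 := by
    intro hcon
    apply hns
    ext x y
    have h1 := congrFun (congrFun hcon x) y
    have h2 := congrFun (congrFun hcon y) x
    simp only [hBapply, Matrix.smul_apply, Matrix.one_apply, smul_eq_mul] at h1 h2
    rw [Matrix.transpose_apply]
    by_cases hxy : x = y
    · rw [hxy]
    · rw [if_neg hxy, mul_zero, Complex.ofReal_eq_zero] at h1
      rw [if_neg (Ne.symm hxy), mul_zero, Complex.ofReal_eq_zero] at h2
      rw [h1, h2]
  -- at least one nonreal eigenvalue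
  have hsl : lam1 + lam2 = -1 := by rw [hl1def, hl2def]; ring
  have hml : lam1 * lam2 = c := by
    have h := hfact 0
    rw [zero_sub, zero_sub, neg_mul_neg] at h
    simpa using h.symm
  have hone : lam1 ∈ spectrum ℂ B ∨ lam2 ∈ spectrum ℂ B := by
    by_contra hcon
    push_neg at hcon
    obtain ⟨h1, h2⟩ := hcon
    rw [spectrum.notMem_iff, Algebra.algebraMap_eq_smul_one] at h1 h2
    have hU : IsUnit ((lam1 • (1:Matrix (Fin n) (Fin n) ℂ) - B) * (lam2 • 1 - B)) := h1.mul h2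
    have hprodU : (lam1 • (1:Matrix (Fin n) (Fin n) ℂ) - B) * (lam2 • 1 - B)
        = B*B + B + c•1 := by
      simp only [Matrix.sub_mul, Matrix.mul_sub, Matrix.smul_mul, Matrix.mul_smul,
        Matrix.one_mul, Matrix.mul_one, smul_smul]
      match_scalars
      · linear_combination hml
      · linear_combination -hsl
      · ring
    have h0 : (B - (k:ℂ)•1) * (B*B + B + c•1) = 0 * (B*B + B + c•1) := by
      rw [hq, zero_mul]
    have := IsUnit.mul_right_cancel (hprodU ▸ hU) h0
    exact hBk (sub_eq_zero.mp this)
  have hcl1 : (starRingEnd ℂ) lam1 = lam2 := by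
    rw [hl1def, hl2def]
    simp [map_div₀, Complex.conj_I, Complex.conj_ofReal, map_ofNat]
    ring
  have hcl2 : (starRingEnd ℂ) lam2 = lam1 := by
    rw [← hcl1, Complex.conj_conj]
  have hl12 : lam1 ∈ spectrum ℂ B ∧ lam2 ∈ spectrum ℂ B := by
    rcases hone with h | h
    · exact ⟨h, hcl1 ▸ hconj _ h⟩
    · exact ⟨hcl2 ▸ hconj _ h, h⟩
  refine ⟨hn, ?_⟩
  ext μ
  simp only [Set.mem_insert_iff, Set.mem_singleton_iff]
  constructor
  · intro hμ
    exact hsub μ hμ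
  · rintro (rfl | rfl | rfl)
    · exact hkspec
    · exact hl12.1
    · exact hl12.2
end

section
/- An amorphic association scheme with at least three classes is symmetric: let d ≥ 3 and let A_0, A_1, …, A_d form an association scheme such that for EVERY partition Λ of {0,1,…,d} having {0} as a block (not assumed admissible), the block-sum matrices B_C = ∑_{i∈C} A_i, indexed by the blocks C of Λ, again form an association scheme. Then A_i = A_iᵀ for all i. -/
open Matrix BigOperators

set_option maxHeartbeats 1600000 in
/-- An amorphic association scheme with at least three classes is symmetric:
if every partition of the index set having `{0}` as a block (not assumed
admissible) yields block-sum matrices forming an association scheme, then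
every relation is symmetric. -/
theorem amorphic_three_classes_is_symmetric
    (d : ℕ) (hd : 3 ≤ d) (n : ℕ)
    (A : Fin (d + 1) → Matrix (Fin n) (Fin n) ℝ) (σ : Fin (d + 1) → Fin (d + 1))
    (hA : IsAssocScheme n A 0 σ)
    (hamorphic : ∀ Λ : Finset (Finset (Fin (d + 1))), IsPartition Λ →
      ({(0 : Fin (d + 1))} : Finset (Fin (d + 1))) ∈ Λ → GivesFusion n A 0 Λ) :
    ∀ i, A i = (A i)ᵀ := by
  obtain ⟨hne, h01, hid, hsum, hT, -⟩ := hA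
  have hnn : ∀ j x y, (0:ℝ) ≤ A j x y := by
    intro j x y; rcases h01 j x y with h | h <;> simp [h]
  have hsum1 : ∀ x y, ∑ j, A j x y = 1 := by
    intro x y
    have := congrFun (congrFun hsum x) y
    simpa [Matrix.sum_apply] using this
  -- Key: a block sum equal to a single relation forces the block to be a singleton.
  have key : ∀ (S : Finset (Fin (d+1))) (k : Fin (d+1)),
      (∑ j ∈ S, A j) = A k → S = {k} := by
    intro S k hS
    have hmem : ∀ j ∈ S, j = k := by
      intro j hj
      by_contra hjk
      obtain ⟨x, y, hxy⟩ : ∃ x y, A j x y ≠ 0 := by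
        by_contra h; push_neg at h
        exact hne j (by ext x y; simpa using h x y)
      have hj1 : A j x y = 1 := by
        rcases h01 j x y with h | h
        · exact absurd h hxy
        · exact h
      have hk1 : (1:ℝ) ≤ A k x y := by
        have h2 := congrFun (congrFun hS x) y
        rw [Matrix.sum_apply] at h2
        have h3 : A j x y ≤ ∑ l ∈ S, A l x y :=
          Finset.single_le_sum (fun l _ => hnn l x y) hj
        rw [h2, hj1] at h3
        exact h3
      have hpair : ∑ l ∈ ({j, k} : Finset (Fin (d+1))), A l x y ≤ ∑ l, A l x y :=
        Finset.sum_le_sum_of_subset_of_nonneg (Finset.subset_univ _)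
          (fun l _ _ => hnn l x y)
      rw [Finset.sum_pair hjk, hsum1 x y] at hpair
      linarith
    have hSne : S.Nonempty := by
      rcases S.eq_empty_or_nonempty with rfl | h
      · simp at hS; exact absurd hS.symm (hne k)
      · exact h
    obtain ⟨j, hj⟩ := hSne
    have hjk := hmem j hj
    subst hjk
    exact Finset.eq_singleton_iff_unique_mem.mpr ⟨hj, hmem⟩
  have hAinj : ∀ j k, A j = A k → j = k := by
    intro j k h
    have := key {j} k (by simpa using h)
    simpa using this
  intro i
  by_cases hσ : σ i = i
  · rw [hT i, hσ]
  exfalso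
  have hi0 : i ≠ 0 := by
    rintro rfl
    apply hσ
    apply hAinj
    rw [← hT 0, hid, Matrix.transpose_one]
  have h0i : (0 : Fin (d+1)) ≠ i := Ne.symm hi0
  have hσi0 : σ i ≠ 0 := by
    intro h
    apply hi0
    apply hAinj
    have hti := hT i
    rw [h, hid] at hti
    rw [hid, ← Matrix.transpose_one, ← hti, Matrix.transpose_transpose]
  -- the complementary block
  set C : Finset (Fin (d+1)) := Finset.univ \ ({0, i} : Finset (Fin (d+1))) with hC
  have hC2 : 2 ≤ C.card := by
    rw [hC, Finset.card_sdiff_of_subset (Finset.subset_univ _), Finset.card_univ,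
      Fintype.card_fin, Finset.card_pair h0i]
    omega
  have hCne : C.Nonempty := Finset.card_pos.mp (by omega)
  have hpart : IsPartition ({{0}, {i}, C} : Finset (Finset (Fin (d+1)))) := by
    constructor
    · intro B hB
      simp only [Finset.mem_insert, Finset.mem_singleton] at hB
      rcases hB with rfl | rfl | rfl
      · exact ⟨0, by simp⟩
      · exact ⟨i, by simp⟩
      · exact hCne
    · intro j
      by_cases hj0 : j = 0
      · refine ⟨{0}, ⟨by simp, by simp [hj0]⟩, ?_⟩
        rintro B ⟨hB, hjB⟩
        simp only [Finset.mem_insert, Finset.mem_singleton] at hB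
        rcases hB with rfl | rfl | rfl
        · rfl
        · rw [Finset.mem_singleton] at hjB; exact absurd (hj0.symm.trans hjB) h0i
        · rw [hC] at hjB; simp [hj0] at hjB
      by_cases hji : j = i
      · refine ⟨{i}, ⟨by simp, by simp [hji]⟩, ?_⟩
        rintro B ⟨hB, hjB⟩
        simp only [Finset.mem_insert, Finset.mem_singleton] at hB
        rcases hB with rfl | rfl | rfl
        · rw [Finset.mem_singleton] at hjB; exact absurd (hji.symm.trans hjB) hi0
        · rfl
        · rw [hC] at hjB; simp [hji] at hjB
      · refine ⟨C, ⟨by simp, by rw [hC]; simp [hj0, hji]⟩, ?_⟩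
        rintro B ⟨hB, hjB⟩
        simp only [Finset.mem_insert, Finset.mem_singleton] at hB
        rcases hB with rfl | rfl | rfl
        · rw [Finset.mem_singleton] at hjB; exact absurd hjB hj0
        · rw [Finset.mem_singleton] at hjB; exact absurd hjB hji
        · rfl
  obtain ⟨E, σ', hE, -, -, -, -, hT', -⟩ :=
    hamorphic ({{0}, {i}, C} : Finset (Finset (Fin (d+1)))) hpart (by simp)
  set Bi : {B // B ∈ ({{0}, {i}, C} : Finset (Finset (Fin (d+1))))} :=
    ⟨{i}, by simp⟩ with hBi
  have hts : (∑ j ∈ ((σ' Bi : Finset (Fin (d+1)))), A j) = A (σ i) := by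
    have h1 := hT' Bi
    simp only [hBi] at h1
    rw [Finset.sum_singleton, hT i] at h1
    exact h1.symm
  have hsingle : ((σ' Bi : Finset (Fin (d+1)))) = {σ i} := key _ _ hts
  have hmemΛ := (σ' Bi).2
  rw [hsingle] at hmemΛ
  simp only [Finset.mem_insert, Finset.mem_singleton] at hmemΛ
  rcases hmemΛ with h | h | h
  · exact hσi0 (Finset.singleton_inj.mp h)
  · exact hσ (Finset.singleton_inj.mp h)
  · have : C.card = 1 := by rw [← h]; simp
    omega
end
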